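/- arXiv:2407.11328 — 5 statements merged into one kernel-verified Lean document; each statement's English description precedes it below -/
import Mathlib

section
/- Let X₁ and X₂ be degree-similar finite simple graphs on n vertices, and let Y₁ and Y₂ be degree-similar finite simple graphs on m vertices. Then the strong products X₁ ⊠ Y₁ and X₂ ⊠ Y₂ are degree similar. -/
open Matrix

open Classical in
noncomputable def adjMat {V : Type*} (G : SimpleGraph V) : Matrix V V ℝ :=
  Matrix.of fun a b => if G.Adj a b then 1 else 0

noncomputable def gdeg {V : Type*} (G : SimpleGraph V) (v : V) : ℕ :=
  Nat.card (G.neighborSet v)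

noncomputable def degMat {V : Type*} [DecidableEq V] (G : SimpleGraph V) : Matrix V V ℝ :=
  Matrix.diagonal fun v => (gdeg G v : ℝ)

/-- Two graphs (on possibly different vertex types of the same cardinality) are
degree similar if there is an invertible real matrix conjugating the adjacency
matrix of the first to that of the second, and likewise for the degree matrices. -/
def DegreeSimilar {V W : Type*} [Fintype V] [Fintype W] [DecidableEq V] [DecidableEq W]
    (G : SimpleGraph V) (H : SimpleGraph W) : Prop :=
  ∃ (e : V ≃ W) (M : Matrix V V ℝ), IsUnit M ∧
    M⁻¹ * adjMat G * M = (adjMat H).submatrix ⇑e ⇑e ∧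
    M⁻¹ * degMat G * M = (degMat H).submatrix ⇑e ⇑e

/-- The Cartesian product of graphs. -/
def cartProd {V W : Type*} (G : SimpleGraph V) (H : SimpleGraph W) :
    SimpleGraph (V × W) :=
  SimpleGraph.fromRel fun a b =>
    (a.1 = b.1 ∧ H.Adj a.2 b.2) ∨ (a.2 = b.2 ∧ G.Adj a.1 b.1)

/-- The tensor product of graphs. -/
def tensorProd {V W : Type*} (G : SimpleGraph V) (H : SimpleGraph W) :
    SimpleGraph (V × W) :=
  SimpleGraph.fromRel fun a b => G.Adj a.1 b.1 ∧ H.Adj a.2 b.2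

/-- The strong product of graphs. -/
def strongProd {V W : Type*} (G : SimpleGraph V) (H : SimpleGraph W) :
    SimpleGraph (V × W) :=
  SimpleGraph.fromRel fun a b =>
    (a.1 = b.1 ∧ H.Adj a.2 b.2) ∨ (a.2 = b.2 ∧ G.Adj a.1 b.1) ∨
      (G.Adj a.1 b.1 ∧ H.Adj a.2 b.2)

/-- The lexicographic product of graphs. -/
def lexProd {V W : Type*} (G : SimpleGraph V) (H : SimpleGraph W) :
    SimpleGraph (V × W) :=
  SimpleGraph.fromRel fun a b =>
    G.Adj a.1 b.1 ∨ (a.1 = b.1 ∧ H.Adj a.2 b.2)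

open Kronecker

theorem adjMat_strongProd {V W : Type*} [DecidableEq V] [DecidableEq W]
    (G : SimpleGraph V) (H : SimpleGraph W) :
    adjMat (strongProd G H) =
      adjMat G ⊗ₖ adjMat H + adjMat G ⊗ₖ (1 : Matrix W W ℝ) + (1 : Matrix V V ℝ) ⊗ₖ adjMat H := by
  ext ⟨a,b⟩ ⟨c,d⟩
  simp only [adjMat, strongProd, Matrix.add_apply, Matrix.kroneckerMap_apply, Matrix.of_apply,
    Matrix.one_apply, SimpleGraph.fromRel_adj, Prod.mk.injEq, ne_eq]
  by_cases h1 : a = c <;> by_cases h2 : b = d <;>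
    by_cases h3 : G.Adj a c <;> by_cases h4 : H.Adj b d <;>
    subst_vars <;>
    simp_all [SimpleGraph.irrefl, G.adj_symm, H.adj_symm, SimpleGraph.adj_comm, eq_comm]

theorem neighborSet_strongProd {V W : Type*} (G : SimpleGraph V) (H : SimpleGraph W)
    (a : V) (b : W) :
    (strongProd G H).neighborSet (a,b) =
      ((insert a (G.neighborSet a)) ×ˢ (insert b (H.neighborSet b))) \ {(a,b)} := by
  ext ⟨c,d⟩
  simp only [SimpleGraph.mem_neighborSet, strongProd, SimpleGraph.fromRel_adj, Set.mem_diff,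
    Set.mem_prod, Set.mem_insert_iff, SimpleGraph.mem_neighborSet, Set.mem_singleton_iff,
    Prod.mk.injEq, ne_eq]
  constructor
  · rintro ⟨hne, (⟨h1,h2⟩|⟨h1,h2⟩|⟨h1,h2⟩)|(⟨h1,h2⟩|⟨h1,h2⟩|⟨h1,h2⟩)⟩ <;>
      refine ⟨?_, fun h' => hne ⟨h'.1.symm, h'.2.symm⟩⟩
    exacts [⟨Or.inl h1.symm, Or.inr h2⟩, ⟨Or.inr h2, Or.inl h1.symm⟩, ⟨Or.inr h1, Or.inr h2⟩,
      ⟨Or.inl h1, Or.inr h2.symm⟩, ⟨Or.inr h2.symm, Or.inl h1⟩, ⟨Or.inr h1.symm, Or.inr h2.symm⟩]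
  · rintro ⟨⟨h1 | h1, h2 | h2⟩, hne⟩
    · exact absurd ⟨h1, h2⟩ hne
    · exact ⟨fun h => H.irrefl (h.2 ▸ h2), Or.inl (Or.inl ⟨h1.symm, h2⟩)⟩
    · exact ⟨fun h => G.irrefl (h.1 ▸ h1), Or.inl (Or.inr (Or.inl ⟨h2.symm, h1⟩))⟩
    · exact ⟨fun h => G.irrefl (h.1 ▸ h1), Or.inl (Or.inr (Or.inr ⟨h1, h2⟩))⟩

theorem gdeg_strongProd {V W : Type*} [Fintype V] [Fintype W]
    (G : SimpleGraph V) (H : SimpleGraph W) (a : V) (b : W) :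
    gdeg (strongProd G H) (a,b) + 1 = (gdeg G a + 1) * (gdeg H b + 1) := by
  have hmem : (a,b) ∈ (insert a (G.neighborSet a)) ×ˢ (insert b (H.neighborSet b)) :=
    ⟨Set.mem_insert _ _, Set.mem_insert _ _⟩
  have h1 : gdeg (strongProd G H) (a,b) =
      ((insert a (G.neighborSet a)) ×ˢ (insert b (H.neighborSet b))).ncard - 1 := by
    rw [gdeg, Nat.card_coe_set_eq, neighborSet_strongProd,
      Set.ncard_diff_singleton_of_mem hmem]
  have hna : a ∉ G.neighborSet a := fun h => G.irrefl h
  have hnb : b ∉ H.neighborSet b := fun h => H.irrefl h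
  have h2 : ((insert a (G.neighborSet a)) ×ˢ (insert b (H.neighborSet b))).ncard =
      (gdeg G a + 1) * (gdeg H b + 1) := by
    rw [← Nat.card_coe_set_eq, Nat.card_congr (Equiv.Set.prod _ _), Nat.card_prod,
      Nat.card_coe_set_eq, Nat.card_coe_set_eq,
      Set.ncard_insert_of_notMem hna (Set.toFinite _),
      Set.ncard_insert_of_notMem hnb (Set.toFinite _),
      gdeg, gdeg, Nat.card_coe_set_eq, Nat.card_coe_set_eq]
  have hpos : 1 ≤ ((insert a (G.neighborSet a)) ×ˢ (insert b (H.neighborSet b))).ncard := by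
    rw [h2]; exact Nat.one_le_iff_ne_zero.mpr (Nat.mul_ne_zero (Nat.succ_ne_zero _) (Nat.succ_ne_zero _))
  omega

theorem degMat_strongProd {V W : Type*} [Fintype V] [Fintype W]
    [DecidableEq V] [DecidableEq W] (G : SimpleGraph V) (H : SimpleGraph W) :
    degMat (strongProd G H) =
      (degMat G + 1) ⊗ₖ (degMat H + 1) - 1 := by
  have hG : degMat G + 1 = Matrix.diagonal fun v => ((gdeg G v : ℝ) + 1) := by
    rw [degMat, ← Matrix.diagonal_one, Matrix.diagonal_add]
  have hH : degMat H + 1 = Matrix.diagonal fun v => ((gdeg H v : ℝ) + 1) := by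
    rw [degMat, ← Matrix.diagonal_one, Matrix.diagonal_add]
  rw [hG, hH, Matrix.diagonal_kronecker_diagonal, degMat, ← Matrix.diagonal_one,
    Matrix.diagonal_sub]
  refine congrArg Matrix.diagonal (funext fun p => ?_)
  obtain ⟨a, b⟩ := p
  have h := gdeg_strongProd G H a b
  have h' : ((gdeg (strongProd G H) (a,b) : ℝ) + 1) = ((gdeg G a : ℝ) + 1) * ((gdeg H b : ℝ) + 1) := by
    exact_mod_cast congrArg (Nat.cast : ℕ → ℝ) h
  show (gdeg (strongProd G H) (a,b) : ℝ) = ((gdeg G a : ℝ) + 1) * ((gdeg H b : ℝ) + 1) - 1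
  linarith

/-- Degree-similar factors give degree-similar strong products. -/
theorem degreeSimilar_strongProd {V W : Type*} [Fintype V] [Fintype W]
    [DecidableEq V] [DecidableEq W]
    (X₁ X₂ : SimpleGraph V) (Y₁ Y₂ : SimpleGraph W)
    (hX : DegreeSimilar X₁ X₂) (hY : DegreeSimilar Y₁ Y₂)  :
    DegreeSimilar (strongProd X₁ Y₁) (strongProd X₂ Y₂) := by
  obtain ⟨e₁, M₁, hU₁, hA₁, hD₁⟩ := hX
  obtain ⟨e₂, M₂, hU₂, hA₂, hD₂⟩ := hY
  have hd₁ : IsUnit M₁.det := (Matrix.isUnit_iff_isUnit_det M₁).mp hU₁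
  have hd₂ : IsUnit M₂.det := (Matrix.isUnit_iff_isUnit_det M₂).mp hU₂
  have hinv : (M₁ ⊗ₖ M₂)⁻¹ = M₁⁻¹ ⊗ₖ M₂⁻¹ := Matrix.inv_kronecker M₁ M₂
  have hUnit : IsUnit (M₁ ⊗ₖ M₂) := by
    rw [Matrix.isUnit_iff_isUnit_det, Matrix.det_kronecker]
    exact (hd₁.pow _).mul (hd₂.pow _)
  have hconj : ∀ (A : Matrix V V ℝ) (B : Matrix W W ℝ),
      (M₁ ⊗ₖ M₂)⁻¹ * (A ⊗ₖ B) * (M₁ ⊗ₖ M₂) = (M₁⁻¹ * A * M₁) ⊗ₖ (M₂⁻¹ * B * M₂) := by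
    intro A B
    rw [hinv, ← Matrix.mul_kronecker_mul, ← Matrix.mul_kronecker_mul]
  have hc1 : M₁⁻¹ * (1 : Matrix V V ℝ) * M₁ = 1 := by
    rw [Matrix.mul_one, Matrix.nonsing_inv_mul M₁ hd₁]
  have hc2 : M₂⁻¹ * (1 : Matrix W W ℝ) * M₂ = 1 := by
    rw [Matrix.mul_one, Matrix.nonsing_inv_mul M₂ hd₂]
  have hsub : ∀ (A : Matrix V V ℝ) (B : Matrix W W ℝ),
      (A ⊗ₖ B).submatrix ⇑(e₁.prodCongr e₂) ⇑(e₁.prodCongr e₂) =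
        (A.submatrix ⇑e₁ ⇑e₁) ⊗ₖ (B.submatrix ⇑e₂ ⇑e₂) := by
    intro A B; ext ⟨a,b⟩ ⟨c,d⟩; rfl
  have hsub1 : ((1 : Matrix V V ℝ)).submatrix ⇑e₁ ⇑e₁ = 1 := Matrix.submatrix_one_equiv e₁
  have hsub2 : ((1 : Matrix W W ℝ)).submatrix ⇑e₂ ⇑e₂ = 1 := Matrix.submatrix_one_equiv e₂
  have hkinv : (M₁ ⊗ₖ M₂)⁻¹ * (M₁ ⊗ₖ M₂) = 1 :=
    Matrix.nonsing_inv_mul _ ((Matrix.isUnit_iff_isUnit_det _).mp hUnit)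
  refine ⟨e₁.prodCongr e₂, M₁ ⊗ₖ M₂, hUnit, ?_, ?_⟩
  · rw [adjMat_strongProd, adjMat_strongProd]
    simp only [Matrix.submatrix_add, Pi.add_apply, hsub, hsub1, hsub2,
      Matrix.mul_add, Matrix.add_mul, hconj, hc1, hc2, hA₁, hA₂]
  · rw [degMat_strongProd, degMat_strongProd, Matrix.mul_sub, Matrix.sub_mul, Matrix.mul_one,
      hkinv, hconj]
    simp only [Matrix.submatrix_sub, Pi.sub_apply, hsub, Matrix.submatrix_add, Pi.add_apply,
      hsub1, hsub2, Matrix.submatrix_one_equiv]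
    rw [Matrix.mul_add, Matrix.add_mul, Matrix.mul_add, Matrix.add_mul, hD₁, hD₂, hc1, hc2]
end

section
/- Let X₁ and X₂ be degree-similar finite simple graphs on n vertices, and let Y₁ and Y₂ be degree-similar finite simple graphs on m vertices with Y₁ connected. Then the lexicographic products X₁ ⊙ Y₁ and X₂ ⊙ Y₂ are degree similar. -/
open Matrix

lemma adjMat_eq {V : Type*} (G : SimpleGraph V) [DecidableRel G.Adj] :
    adjMat G = G.adjMatrix ℝ := by
  ext a b
  by_cases h : G.Adj a b <;> simp [adjMat, h]

lemma gdeg_eq {V : Type*} [Fintype V] (G : SimpleGraph V) [DecidableRel G.Adj] (v : V) :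
    gdeg G v = G.degree v := by
  rw [gdeg, Nat.card_eq_fintype_card, G.card_neighborSet_eq_degree]

lemma degMat_eq {V : Type*} [Fintype V] [DecidableEq V] (G : SimpleGraph V)
    [DecidableRel G.Adj] : degMat G = G.degMatrix ℝ := by
  unfold degMat SimpleGraph.degMatrix
  simp_rw [gdeg_eq]

lemma conj_eq_iff {n : Type*} [Fintype n] [DecidableEq n] {M A B : Matrix n n ℝ}
    (hM : IsUnit M) : M⁻¹ * A * M = B ↔ A * M = M * B := by
  have hd := (Matrix.isUnit_iff_isUnit_det M).mp hM
  constructor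
  · rintro rfl
    rw [← Matrix.mul_assoc, ← Matrix.mul_assoc, Matrix.mul_nonsing_inv _ hd, Matrix.one_mul]
  · intro h
    rw [Matrix.mul_assoc, h, ← Matrix.mul_assoc, Matrix.nonsing_inv_mul _ hd, Matrix.one_mul]

lemma lexProd_adj {V W : Type*} (G : SimpleGraph V) (H : SimpleGraph W) (a b : V × W) :
    (lexProd G H).Adj a b ↔ G.Adj a.1 b.1 ∨ (a.1 = b.1 ∧ H.Adj a.2 b.2) := by
  simp only [lexProd, SimpleGraph.fromRel_adj]
  constructor
  · rintro ⟨hne, (h | ⟨h1, h2⟩) | (h | ⟨h1, h2⟩)⟩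
    · exact Or.inl h
    · exact Or.inr ⟨h1, h2⟩
    · exact Or.inl h.symm
    · exact Or.inr ⟨h1.symm, h2.symm⟩
  · rintro (h | ⟨h1, h2⟩)
    · exact ⟨fun he => G.ne_of_adj h (congrArg Prod.fst he), Or.inl (Or.inl h)⟩
    · exact ⟨fun he => H.ne_of_adj h2 (congrArg Prod.snd he), Or.inl (Or.inr ⟨h1, h2⟩)⟩

noncomputable def Jmat (W : Type*) : Matrix W W ℝ := Matrix.of fun _ _ => (1 : ℝ)

open Kronecker in
lemma adjMat_lexProd {V W : Type*} [DecidableEq V] (G : SimpleGraph V) (H : SimpleGraph W) :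
    adjMat (lexProd G H) = adjMat G ⊗ₖ Jmat W + (1 : Matrix V V ℝ) ⊗ₖ adjMat H := by
  classical
  ext ⟨a, b⟩ ⟨c, d⟩
  simp only [adjMat, Jmat, Matrix.add_apply, Matrix.kroneckerMap_apply, Matrix.of_apply,
    Matrix.one_apply, lexProd_adj]
  by_cases h1 : G.Adj a c
  · simp [h1, G.ne_of_adj h1]
  · by_cases h2 : a = c <;> by_cases h3 : H.Adj b d <;> simp [h1, h2, h3]

lemma gdeg_lexProd {V W : Type*} [Fintype V] [Fintype W] (G : SimpleGraph V)
    (H : SimpleGraph W) (u : V) (v : W) :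
    gdeg (lexProd G H) (u, v) = gdeg G u * Fintype.card W + gdeg H v := by
  classical
  rw [gdeg_eq, gdeg_eq, gdeg_eq]
  have hfin : (lexProd G H).neighborFinset (u, v) =
      (G.neighborFinset u ×ˢ Finset.univ) ∪ ({u} ×ˢ H.neighborFinset v) := by
    ext ⟨a, b⟩
    simp only [SimpleGraph.mem_neighborFinset, lexProd_adj, Finset.mem_union,
      Finset.mem_product, Finset.mem_univ, Finset.mem_singleton, and_true]
    constructor
    · rintro (h | ⟨h1, h2⟩)
      · exact Or.inl h
      · exact Or.inr ⟨h1.symm, h2⟩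
    · rintro (h | ⟨h1, h2⟩)
      · exact Or.inl h
      · exact Or.inr ⟨h1.symm, h2⟩
  have hdisj : Disjoint (G.neighborFinset u ×ˢ (Finset.univ : Finset W))
      ({u} ×ˢ H.neighborFinset v) := by
    rw [Finset.disjoint_left]
    rintro ⟨a, b⟩ h1 h2
    simp only [Finset.mem_product, SimpleGraph.mem_neighborFinset, Finset.mem_singleton] at h1 h2
    exact G.ne_of_adj h1.1 h2.1.symm
  rw [SimpleGraph.degree, hfin, Finset.card_union_of_disjoint hdisj, Finset.card_product,
    Finset.card_product, Finset.card_singleton, Finset.card_univ, one_mul]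
  rfl

open Kronecker in
lemma degMat_lexProd {V W : Type*} [Fintype V] [Fintype W] [DecidableEq V] [DecidableEq W]
    (G : SimpleGraph V) (H : SimpleGraph W) :
    degMat (lexProd G H) = degMat G ⊗ₖ (Matrix.diagonal fun _ : W => (Fintype.card W : ℝ))
      + (1 : Matrix V V ℝ) ⊗ₖ degMat H := by
  unfold degMat
  rw [← Matrix.diagonal_one, Matrix.diagonal_kronecker_diagonal,
    Matrix.diagonal_kronecker_diagonal, Matrix.diagonal_add]
  have h : ∀ p : V × W, (gdeg (lexProd G H) p : ℝ)
      = gdeg G p.1 * Fintype.card W + 1 * gdeg H p.2 := by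
    rintro ⟨u, v⟩
    rw [gdeg_lexProd]
    push_cast
    ring
  simp only [h]

lemma gdeg_comap {V W : Type*} (f : V ≃ W) (G : SimpleGraph W) (a : V) :
    gdeg (SimpleGraph.comap f G) a = gdeg G (f a) := by
  exact Nat.card_congr (Equiv.subtypeEquiv f (fun w => by
    simp [SimpleGraph.mem_neighborSet, SimpleGraph.comap]))

lemma jmat_comm {W : Type*} [Fintype W] [DecidableEq W] (Y₁ Y₂ : SimpleGraph W)
    (hY₁ : Y₁.Connected) (f : W ≃ W) (N : Matrix W W ℝ) (hN : IsUnit N)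
    (hA : adjMat Y₁ * N = N * (adjMat Y₂).submatrix f f)
    (hD : degMat Y₁ * N = N * (degMat Y₂).submatrix f f) :
    Jmat W * N = N * Jmat W := by
  classical
  have hdet := (Matrix.isUnit_iff_isUnit_det N).mp hN
  set Y₂' := SimpleGraph.comap f Y₂ with hY₂'
  have hA2 : (adjMat Y₂).submatrix ⇑f ⇑f = adjMat Y₂' := by
    ext a b
    simp [adjMat, hY₂', SimpleGraph.comap]
  have hD2 : (degMat Y₂).submatrix ⇑f ⇑f = degMat Y₂' := by
    ext a b
    simp only [degMat, Matrix.submatrix_apply, Matrix.diagonal_apply, f.injective.eq_iff]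
    rw [hY₂', gdeg_comap]
  have hA' : adjMat Y₁ * N = N * adjMat Y₂' := by rw [hA, hA2]
  have hD' : degMat Y₁ * N = N * degMat Y₂' := by rw [hD, hD2]
  have hL : Y₁.lapMatrix ℝ * N = N * Y₂'.lapMatrix ℝ := by
    rw [SimpleGraph.lapMatrix, SimpleGraph.lapMatrix, Matrix.sub_mul, Matrix.mul_sub,
      ← adjMat_eq, ← degMat_eq, ← adjMat_eq, ← degMat_eq, hA', hD']
  have hLT : Nᵀ * Y₁.lapMatrix ℝ = Y₂'.lapMatrix ℝ * Nᵀ := by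
    have h := congrArg Matrix.transpose hL
    rwa [Matrix.transpose_mul, Matrix.transpose_mul, (Y₁.isSymm_lapMatrix ℝ).eq,
      (Y₂'.isSymm_lapMatrix ℝ).eq] at h
  -- N *ᵥ 1 has constant entries
  have h1 : Y₁.lapMatrix ℝ *ᵥ (N *ᵥ fun _ => (1 : ℝ)) = 0 := by
    rw [Matrix.mulVec_mulVec, hL, ← Matrix.mulVec_mulVec,
      Y₂'.lapMatrix_mulVec_const_eq_zero, Matrix.mulVec_zero]
  have hrow : ∀ i j : W, (N *ᵥ fun _ => (1 : ℝ)) i = (N *ᵥ fun _ => (1 : ℝ)) j := by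
    have h := (Y₁.lapMatrix_mulVec_eq_zero_iff_forall_reachable
      (x := N *ᵥ fun _ => (1 : ℝ))).mp h1
    exact fun i j => h i j (hY₁.preconnected i j)
  -- Y₂' is connected
  have hconn₂ : Y₂'.Connected := by
    let e : (W → ℝ) ≃ₗ[ℝ] (W → ℝ) :=
      Matrix.toLin'OfInv (Matrix.nonsing_inv_mul N hdet) (Matrix.mul_nonsing_inv N hdet)
    have hker : LinearMap.ker (Matrix.toLin' (Y₂'.lapMatrix ℝ)) =
        Submodule.comap (e : (W → ℝ) →ₗ[ℝ] (W → ℝ))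
          (LinearMap.ker (Matrix.toLin' (Y₁.lapMatrix ℝ))) := by
      ext x
      have hcoe : (e : (W → ℝ) →ₗ[ℝ] (W → ℝ)) x = N *ᵥ x := Matrix.toLin'_apply N x
      simp only [LinearMap.mem_ker, Submodule.mem_comap, hcoe, Matrix.toLin'_apply]
      constructor
      · intro h
        rw [Matrix.mulVec_mulVec, hL, ← Matrix.mulVec_mulVec, h, Matrix.mulVec_zero]
      · intro h
        have h' : N *ᵥ (Y₂'.lapMatrix ℝ *ᵥ x) = 0 := by
          rw [Matrix.mulVec_mulVec, ← hL, ← Matrix.mulVec_mulVec]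
          exact h
        calc Y₂'.lapMatrix ℝ *ᵥ x
            = (N⁻¹ * N) *ᵥ (Y₂'.lapMatrix ℝ *ᵥ x) := by
              rw [Matrix.nonsing_inv_mul N hdet, Matrix.one_mulVec]
          _ = N⁻¹ *ᵥ (N *ᵥ (Y₂'.lapMatrix ℝ *ᵥ x)) := by rw [← Matrix.mulVec_mulVec]
          _ = 0 := by rw [h', Matrix.mulVec_zero]
    have hcard : Fintype.card Y₂'.ConnectedComponent = Fintype.card Y₁.ConnectedComponent := by
      rw [SimpleGraph.card_connectedComponent_eq_finrank_ker_toLin'_lapMatrix,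
        SimpleGraph.card_connectedComponent_eq_finrank_ker_toLin'_lapMatrix, hker,
        Submodule.comap_equiv_eq_map_symm,
        LinearEquiv.finrank_map_eq]
    have hcard1 : Fintype.card Y₁.ConnectedComponent = 1 := by
      obtain ⟨w₀⟩ := hY₁.nonempty
      refine Fintype.card_eq_one_iff.mpr ⟨Y₁.connectedComponentMk w₀, fun c => ?_⟩
      induction c using SimpleGraph.ConnectedComponent.ind with
      | _ v => exact SimpleGraph.ConnectedComponent.eq.mpr (hY₁.preconnected v w₀)
    rw [hcard1] at hcard
    haveI hsub : Subsingleton Y₂'.ConnectedComponent :=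
      Fintype.card_le_one_iff_subsingleton.mp hcard.le
    haveI : Nonempty W := hY₁.nonempty
    rw [SimpleGraph.connected_iff]
    exact ⟨fun v w => SimpleGraph.ConnectedComponent.eq.mp (Subsingleton.elim _ _), ‹Nonempty W›⟩
  -- Nᵀ *ᵥ 1 has constant entries
  have h2 : Y₂'.lapMatrix ℝ *ᵥ (Nᵀ *ᵥ fun _ => (1 : ℝ)) = 0 := by
    rw [Matrix.mulVec_mulVec, ← hLT, ← Matrix.mulVec_mulVec,
      Y₁.lapMatrix_mulVec_const_eq_zero, Matrix.mulVec_zero]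
  have hcol : ∀ i j : W, (Nᵀ *ᵥ fun _ => (1 : ℝ)) i = (Nᵀ *ᵥ fun _ => (1 : ℝ)) j := by
    have h := (Y₂'.lapMatrix_mulVec_eq_zero_iff_forall_reachable
      (x := Nᵀ *ᵥ fun _ => (1 : ℝ))).mp h2
    exact fun i j => h i j (hconn₂.preconnected i j)
  -- row sums equal column sums
  obtain ⟨w₀⟩ := hY₁.nonempty
  have hsum : ∑ i : W, (N *ᵥ fun _ => (1 : ℝ)) i = ∑ j : W, (Nᵀ *ᵥ fun _ => (1 : ℝ)) j := by
    simp only [Matrix.mulVec, dotProduct, Matrix.transpose_apply, mul_one]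
    exact Finset.sum_comm
  have hc : ∀ i : W, (N *ᵥ fun _ => (1 : ℝ)) i = (N *ᵥ fun _ => (1 : ℝ)) w₀ :=
    fun i => hrow i w₀
  have hd : ∀ i : W, (Nᵀ *ᵥ fun _ => (1 : ℝ)) i = (Nᵀ *ᵥ fun _ => (1 : ℝ)) w₀ :=
    fun i => hcol i w₀
  have hcd : (N *ᵥ fun _ => (1 : ℝ)) w₀ = (Nᵀ *ᵥ fun _ => (1 : ℝ)) w₀ := by
    have h1' : ∑ i : W, (N *ᵥ fun _ => (1 : ℝ)) i
        = (Fintype.card W : ℝ) * (N *ᵥ fun _ => (1 : ℝ)) w₀ := by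
      rw [Finset.sum_congr rfl (fun i _ => hc i), Finset.sum_const, Finset.card_univ,
        nsmul_eq_mul]
    have h2' : ∑ i : W, (Nᵀ *ᵥ fun _ => (1 : ℝ)) i
        = (Fintype.card W : ℝ) * (Nᵀ *ᵥ fun _ => (1 : ℝ)) w₀ := by
      rw [Finset.sum_congr rfl (fun i _ => hd i), Finset.sum_const, Finset.card_univ,
        nsmul_eq_mul]
    have hcardpos : (0 : ℝ) < Fintype.card W := by
      have : 0 < Fintype.card W := Fintype.card_pos_iff.mpr ⟨w₀⟩
      exact_mod_cast this
    have := hsum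
    rw [h1', h2'] at this
    exact mul_left_cancel₀ hcardpos.ne' this
  -- conclude
  ext i j
  simp only [Matrix.mul_apply, Jmat, Matrix.of_apply, one_mul, mul_one]
  have hL1 : ∑ k : W, N k j = (Nᵀ *ᵥ fun _ => (1 : ℝ)) j := by
    simp [Matrix.mulVec, dotProduct]
  have hR1 : ∑ k : W, N i k = (N *ᵥ fun _ => (1 : ℝ)) i := by
    simp [Matrix.mulVec, dotProduct]
  rw [hL1, hR1, hd j, hc i, hcd]

open Kronecker in
lemma submatrix_kron {V W V' W' : Type*} (A : Matrix V' V' ℝ) (B : Matrix W' W' ℝ)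
    (e : V ≃ V') (f : W ≃ W') :
    (A ⊗ₖ B).submatrix ⇑(Equiv.prodCongr e f) ⇑(Equiv.prodCongr e f)
      = (A.submatrix e e) ⊗ₖ (B.submatrix f f) := rfl

lemma submatrix_add' {n m n' m' α : Type*} [Add α] (A B : Matrix m n α)
    (g : m' → m) (h : n' → n) :
    (A + B).submatrix g h = A.submatrix g h + B.submatrix g h := rfl

lemma Jmat_submatrix {W W' : Type*} (f : W ≃ W') :
    (Jmat W').submatrix ⇑f ⇑f = Jmat W := rfl

open Kronecker in
theorem degreeSimilar_lexProd_aux {V W : Type*} [Fintype V] [Fintype W]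
    [DecidableEq V] [DecidableEq W]
    (X₁ X₂ : SimpleGraph V) (Y₁ Y₂ : SimpleGraph W)
    (hX : ∃ (e : V ≃ V) (M : Matrix V V ℝ), IsUnit M ∧
      M⁻¹ * adjMat X₁ * M = (adjMat X₂).submatrix ⇑e ⇑e ∧
      M⁻¹ * degMat X₁ * M = (degMat X₂).submatrix ⇑e ⇑e)
    (hY : ∃ (f : W ≃ W) (N : Matrix W W ℝ), IsUnit N ∧
      N⁻¹ * adjMat Y₁ * N = (adjMat Y₂).submatrix ⇑f ⇑f ∧
      N⁻¹ * degMat Y₁ * N = (degMat Y₂).submatrix ⇑f ⇑f)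
    (hY₁ : Y₁.Connected) :
    ∃ (g : V × W ≃ V × W) (P : Matrix (V × W) (V × W) ℝ), IsUnit P ∧
      P⁻¹ * adjMat (lexProd X₁ Y₁) * P = (adjMat (lexProd X₂ Y₂)).submatrix ⇑g ⇑g ∧
      P⁻¹ * degMat (lexProd X₁ Y₁) * P = (degMat (lexProd X₂ Y₂)).submatrix ⇑g ⇑g := by
  classical
  obtain ⟨e, M, hM, hMA, hMD⟩ := hX
  obtain ⟨f, N, hN, hNA, hND⟩ := hY
  have hMdet := (Matrix.isUnit_iff_isUnit_det M).mp hM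
  have hNdet := (Matrix.isUnit_iff_isUnit_det N).mp hN
  rw [conj_eq_iff hM] at hMA hMD
  rw [conj_eq_iff hN] at hNA hND
  have hJ : Jmat W * N = N * Jmat W := jmat_comm Y₁ Y₂ hY₁ f N hN hNA hND
  have hK : (Matrix.diagonal fun _ : W => (Fintype.card W : ℝ)) * N
      = N * (Matrix.diagonal fun _ : W => (Fintype.card W : ℝ)) := by
    ext i j
    rw [Matrix.diagonal_mul, Matrix.mul_diagonal, mul_comm]
  have hP : IsUnit (M ⊗ₖ N) := by
    rw [Matrix.isUnit_iff_isUnit_det, Matrix.det_kronecker]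
    exact (hMdet.pow _).mul (hNdet.pow _)
  refine ⟨Equiv.prodCongr e f, M ⊗ₖ N, hP, ?_, ?_⟩
  · rw [conj_eq_iff hP, adjMat_lexProd, adjMat_lexProd, submatrix_add',
      submatrix_kron, submatrix_kron, Matrix.submatrix_one_equiv, Jmat_submatrix,
      add_mul, mul_add, ← Matrix.mul_kronecker_mul, ← Matrix.mul_kronecker_mul,
      ← Matrix.mul_kronecker_mul, ← Matrix.mul_kronecker_mul, hMA, hNA, hJ,
      Matrix.one_mul, Matrix.mul_one]
  · rw [conj_eq_iff hP, degMat_lexProd, degMat_lexProd, submatrix_add',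
      submatrix_kron, submatrix_kron, Matrix.submatrix_one_equiv,
      Matrix.submatrix_diagonal_equiv, Function.comp_def,
      add_mul, mul_add, ← Matrix.mul_kronecker_mul, ← Matrix.mul_kronecker_mul,
      ← Matrix.mul_kronecker_mul, ← Matrix.mul_kronecker_mul, hMD, hND, hK,
      Matrix.one_mul, Matrix.mul_one]

/-- Degree-similar factors give degree-similar lexicographic products. -/
theorem degreeSimilar_lexProd {V W : Type*} [Fintype V] [Fintype W]
    [DecidableEq V] [DecidableEq W]
    (X₁ X₂ : SimpleGraph V) (Y₁ Y₂ : SimpleGraph W)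
    (hX : DegreeSimilar X₁ X₂) (hY : DegreeSimilar Y₁ Y₂) (hY₁ : Y₁.Connected) :
    DegreeSimilar (lexProd X₁ Y₁) (lexProd X₂ Y₂) :=
  degreeSimilar_lexProd_aux X₁ X₂ Y₁ Y₂ hX hY hY₁
end

section
/- Let X₁ and X₂ be degree-similar finite simple graphs, let d₁,…,d_k be the distinct vertex degrees occurring in X₁, and fix natural numbers s₁,…,s_k. For i ∈ {1,2} let Γᵢ be the graph obtained from Xᵢ by attaching, for each j ∈ {1,…,k}, exactly s_j new pendant vertices to every vertex of degree d_j (each new vertex is adjacent only to the vertex it is attached to). Then Γ₁ and Γ₂ are degree similar. -/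
open Matrix

/-- The graph obtained from `X` by attaching `t v` new pendant vertices to each
vertex `v` of `X`. -/
def addPendants {V : Type*} (X : SimpleGraph V) (t : V → ℕ) :
    SimpleGraph (V ⊕ Σ v : V, Fin (t v)) :=
  SimpleGraph.fromRel fun a b =>
    match a, b with
    | Sum.inl a, Sum.inl b => X.Adj a b
    | Sum.inl a, Sum.inr b => a = b.1
    | _, _ => False

section Aux

variable {V : Type*}

@[simp] lemma addPendants_adj_inl_inl (X : SimpleGraph V) (t : V → ℕ) (a b : V) :
    (addPendants X t).Adj (Sum.inl a) (Sum.inl b) ↔ X.Adj a b := by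
  simp only [addPendants, SimpleGraph.fromRel_adj]
  constructor
  · rintro ⟨-, h | h⟩
    · exact h
    · exact h.symm
  · intro h
    exact ⟨by simpa using h.ne, Or.inl h⟩

@[simp] lemma addPendants_adj_inl_inr (X : SimpleGraph V) (t : V → ℕ) (a : V)
    (q : Σ v : V, Fin (t v)) :
    (addPendants X t).Adj (Sum.inl a) (Sum.inr q) ↔ a = q.1 := by
  simp only [addPendants, SimpleGraph.fromRel_adj]
  constructor
  · rintro ⟨-, h | h⟩
    · exact h
    · exact h.elim
  · intro h
    exact ⟨by simp, Or.inl h⟩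

@[simp] lemma addPendants_adj_inr_inl (X : SimpleGraph V) (t : V → ℕ) (b : V)
    (q : Σ v : V, Fin (t v)) :
    (addPendants X t).Adj (Sum.inr q) (Sum.inl b) ↔ b = q.1 := by
  rw [SimpleGraph.adj_comm]; exact addPendants_adj_inl_inr X t b q

@[simp] lemma addPendants_adj_inr_inr (X : SimpleGraph V) (t : V → ℕ)
    (q r : Σ v : V, Fin (t v)) :
    ¬ (addPendants X t).Adj (Sum.inr q) (Sum.inr r) := by
  simp only [addPendants, SimpleGraph.fromRel_adj]
  rintro ⟨-, h | h⟩ <;> exact h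

open Classical in
/-- The pendant incidence matrix. -/
noncomputable def pendB (t : V → ℕ) : Matrix V (Σ v : V, Fin (t v)) ℝ :=
  Matrix.of fun x q => if x = q.1 then 1 else 0

open Classical in
lemma adjMat_addPendants (X : SimpleGraph V) (t : V → ℕ) :
    adjMat (addPendants X t) = fromBlocks (adjMat X) (pendB t) (pendB t)ᵀ 0 := by
  ext a b
  cases a with
  | inl a => cases b with
    | inl b => simp [adjMat, pendB, fromBlocks]
    | inr q => simp [adjMat, pendB, fromBlocks]
  | inr q => cases b with
    | inl b => simp [adjMat, pendB, fromBlocks, transpose_apply]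
    | inr r => simp [adjMat, pendB, fromBlocks]

lemma neighborSet_addPendants_inl (X : SimpleGraph V) (t : V → ℕ) (v : V) :
    (addPendants X t).neighborSet (Sum.inl v) =
      Sum.inl '' (X.neighborSet v) ∪ Sum.inr '' {q : Σ w : V, Fin (t w) | q.1 = v} := by
  ext x
  cases x with
  | inl u => simp [SimpleGraph.neighborSet]
  | inr q => simp [SimpleGraph.neighborSet, eq_comm]

lemma neighborSet_addPendants_inr (X : SimpleGraph V) (t : V → ℕ) (q : Σ w : V, Fin (t w)) :
    (addPendants X t).neighborSet (Sum.inr q) = {Sum.inl q.1} := by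
  ext x
  cases x with
  | inl u => simp [SimpleGraph.neighborSet, eq_comm]
  | inr r => simp [SimpleGraph.neighborSet]

lemma card_fiber (t : V → ℕ) (v : V) :
    Set.ncard {q : Σ w : V, Fin (t w) | q.1 = v} = t v := by
  rw [← Nat.card_coe_set_eq]
  have : {q : Σ w : V, Fin (t w) | q.1 = v} ≃ Fin (t v) := by
    refine Equiv.symm (Equiv.ofBijective (fun i => ⟨⟨v, i⟩, rfl⟩) ⟨?_, ?_⟩)
    · intro i j hij
      exact Fin.val_injective (by simpa using congrArg (fun q => (q.1.2 : ℕ)) hij)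
    · rintro ⟨⟨w, i⟩, (h : w = v)⟩
      subst h
      exact ⟨i, rfl⟩
  exact (Nat.card_congr this).trans (by simp)

lemma gdeg_addPendants_inl [Fintype V] (X : SimpleGraph V) (t : V → ℕ) (v : V) :
    gdeg (addPendants X t) (Sum.inl v) = gdeg X v + t v := by
  classical
  rw [gdeg, neighborSet_addPendants_inl]
  rw [Nat.card_coe_set_eq, Set.ncard_union_eq]
  · rw [Set.ncard_image_of_injective _ Sum.inl_injective,
      Set.ncard_image_of_injective _ Sum.inr_injective]
    rw [gdeg, Nat.card_coe_set_eq, card_fiber t v]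
  · rw [Set.disjoint_iff_forall_ne]
    rintro x ⟨a, -, rfl⟩ y ⟨b, -, rfl⟩
    simp

lemma gdeg_addPendants_inr [Fintype V] (X : SimpleGraph V) (t : V → ℕ)
    (q : Σ w : V, Fin (t w)) :
    gdeg (addPendants X t) (Sum.inr q) = 1 := by
  rw [gdeg, neighborSet_addPendants_inr]
  simp

lemma degMat_addPendants [Fintype V] [DecidableEq V] (X : SimpleGraph V) (t : V → ℕ) :
    degMat (addPendants X t) =
      fromBlocks (Matrix.diagonal fun v => ((gdeg X v : ℝ) + t v)) 0 0 1 := by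
  classical
  ext a b
  cases a with
  | inl a => cases b with
    | inl b =>
      rcases eq_or_ne a b with rfl | hab
      · simp [degMat, gdeg_addPendants_inl]
      · simp [degMat, Matrix.diagonal_apply_ne, hab]
    | inr q => simp [degMat, Matrix.diagonal_apply_ne]
  | inr q => cases b with
    | inl b => simp [degMat, Matrix.diagonal_apply_ne]
    | inr r =>
      rcases eq_or_ne q r with rfl | hqr
      · simp [degMat, gdeg_addPendants_inr]
      · simp [degMat, Matrix.diagonal_apply_ne, hqr, Matrix.one_apply_ne, hqr]

open Polynomial in
lemma multiset_eq_of_diag_conj {n : Type*} [Fintype n] [DecidableEq n] (f g : n → ℝ)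
    (M : Matrix n n ℝ) (hM : IsUnit M) (h : Matrix.diagonal f * M = M * Matrix.diagonal g) :
    Multiset.map f Finset.univ.val = Multiset.map g Finset.univ.val := by
  classical
  set MC : Matrix n n ℝ[X] := M.map C with hMC
  have key : Matrix.diagonal (fun v => (X : ℝ[X]) - C (f v)) * MC
      = MC * Matrix.diagonal (fun v => (X : ℝ[X]) - C (g v)) := by
    have hd : ∀ (u : n → ℝ), Matrix.diagonal (fun v => (X : ℝ[X]) - C (u v))
        = Matrix.scalar n (X : ℝ[X]) - (Matrix.diagonal u).map C := by
      intro u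
      rw [Matrix.diagonal_map (map_zero C), Matrix.scalar_apply, ← Matrix.diagonal_sub]
    have hcomm : Matrix.scalar n (X : ℝ[X]) * MC = MC * Matrix.scalar n (X : ℝ[X]) :=
      (Matrix.scalar_commute (X : ℝ[X]) (fun r' => Commute.all _ _) MC)
    rw [hd, hd, Matrix.sub_mul, Matrix.mul_sub, hcomm, ← Matrix.map_mul, ← Matrix.map_mul, h]
  have hdet : ∏ v, ((X : ℝ[X]) - C (f v)) = ∏ v, ((X : ℝ[X]) - C (g v)) := by
    have := congrArg Matrix.det key
    rw [Matrix.det_mul, Matrix.det_mul, Matrix.det_diagonal, Matrix.det_diagonal] at this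
    have hdM : MC.det ≠ 0 := by
      have hh : MC.det = C M.det := by
        rw [hMC, ← RingHom.mapMatrix_apply, ← RingHom.map_det]
      rw [hh]
      exact Polynomial.C_ne_zero.mpr ((Matrix.isUnit_iff_isUnit_det M).mp hM).ne_zero
    rw [mul_comm (∏ v, ((X : ℝ[X]) - C (f v))) MC.det] at this
    exact mul_left_cancel₀ hdM this
  have h1 : (Multiset.map (fun a => (X:ℝ[X]) - C a) (Multiset.map f Finset.univ.val)).prod
      = (Multiset.map (fun a => (X:ℝ[X]) - C a) (Multiset.map g Finset.univ.val)).prod := by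
    rw [Multiset.map_map, Multiset.map_map]
    rw [Finset.prod_eq_multiset_prod, Finset.prod_eq_multiset_prod] at hdet
    exact hdet
  have := congrArg Polynomial.roots h1
  rwa [roots_multiset_prod_X_sub_C, roots_multiset_prod_X_sub_C] at this

lemma exists_perm_of_diag_conj {n : Type*} [Fintype n] [DecidableEq n] (f g : n → ℝ)
    (M : Matrix n n ℝ) (hM : IsUnit M) (h : Matrix.diagonal f * M = M * Matrix.diagonal g) :
    ∃ π : n ≃ n, ∀ v, g (π v) = f v := by
  classical
  have hms := multiset_eq_of_diag_conj f g M hM h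
  have hcard : ∀ c : ℝ, Fintype.card {v // f v = c} = Fintype.card {v // g v = c} := by
    intro c
    have hf : ∀ (u : n → ℝ), Fintype.card {v // u v = c}
        = Multiset.count c (Multiset.map u Finset.univ.val) := by
      intro u
      rw [Fintype.card_subtype, Multiset.count_map]
      have : Multiset.filter (fun a => c = u a) Finset.univ.val
          = Multiset.filter (fun a => u a = c) Finset.univ.val := by
        apply Multiset.filter_congr
        intro a _
        exact eq_comm
      rw [this]
      rfl
    rw [hf, hf, hms]
  refine ⟨Equiv.ofFiberEquiv (f := f) (g := g)
    (fun c => Fintype.equivOfCardEq (hcard c)), fun v => ?_⟩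
  exact Equiv.ofFiberEquiv_map _ v

def sigmaFinEquiv {t₁ t₂ : V → ℕ} (σ : V ≃ V) (h : ∀ v, t₂ (σ v) = t₁ v) :
    (Σ v : V, Fin (t₁ v)) ≃ (Σ v : V, Fin (t₂ v)) where
  toFun p := ⟨σ p.1, Fin.cast (h p.1).symm p.2⟩
  invFun q := ⟨σ.symm q.1, Fin.cast (by rw [← h (σ.symm q.1), Equiv.apply_symm_apply]) q.2⟩
  left_inv p := by
    apply Sigma.ext
    · simp
    · rw [Fin.heq_ext_iff (by simp)]
      simp
  right_inv q := by
    apply Sigma.ext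
    · simp
    · rw [Fin.heq_ext_iff (by simp)]
      simp

@[simp] lemma sigmaFinEquiv_apply {t₁ t₂ : V → ℕ} (σ : V ≃ V)
    (h : ∀ v, t₂ (σ v) = t₁ v) (p : Σ v : V, Fin (t₁ v)) :
    sigmaFinEquiv σ h p = ⟨σ p.1, Fin.cast (h p.1).symm p.2⟩ := rfl

lemma fromBlocks_submatrix {l m n o l' m' n' o' : Type*} {α : Type*}
    (A : Matrix n l α) (B : Matrix n m α) (C : Matrix o l α) (D : Matrix o m α)
    (f : n' → n) (g : o' → o) (f' : l' → l) (g' : m' → m) :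
    (Matrix.fromBlocks A B C D).submatrix (Sum.map f g) (Sum.map f' g') =
      Matrix.fromBlocks (A.submatrix f f') (B.submatrix f g')
        (C.submatrix g f') (D.submatrix g g') := by
  ext a b
  cases a <;> cases b <;> rfl

lemma diagonal_submatrix_equiv {n m : Type*} [DecidableEq n] [DecidableEq m] (f : n → ℝ)
    (e : m ≃ n) :
    (Matrix.diagonal f).submatrix ⇑e ⇑e = Matrix.diagonal (fun v => f (e v)) := by
  ext a b
  rcases eq_or_ne a b with rfl | hab
  · simp
  · rw [Matrix.submatrix_apply, Matrix.diagonal_apply_ne _ (fun hh => hab (e.injective hh)),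
      Matrix.diagonal_apply_ne _ hab]

lemma sum_fin_ite {n : ℕ} (j : ℕ) (c : ℝ) :
    (∑ x : Fin n, if (x : ℕ) = j then c else 0) = if j < n then c else 0 := by
  rcases Nat.lt_or_ge j n with hj | hj
  · rw [if_pos hj, Finset.sum_eq_single (⟨j, hj⟩ : Fin n)]
    · simp
    · intro l _ hl
      rw [if_neg]
      simpa [Fin.ext_iff] using hl
    · simp
  · rw [if_neg (Nat.not_lt.mpr hj)]
    apply Finset.sum_eq_zero
    intro l _
    rw [if_neg]
    exact Nat.ne_of_lt (lt_of_lt_of_le l.2 hj)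

end Aux

/-- Let `X₁, X₂` be degree similar, let `d 0, …, d (k-1)` be the distinct degrees
occurring in `X₁`, and fix `s : Fin k → ℕ`.  Attaching `s j` pendant vertices to every
vertex of degree `d j` (in `X₁` for `Γ₁`, in `X₂` for `Γ₂`) yields degree-similar
graphs. -/
theorem degreeSimilar_addPendants {V : Type*} [Fintype V] [DecidableEq V] {k : ℕ}
    (X₁ X₂ : SimpleGraph V) (h : DegreeSimilar X₁ X₂)
    (d : Fin k → ℕ) (hinj : Function.Injective d)
    (hall : ∀ x : V, ∃ j, gdeg X₁ x = d j)
    (hocc : ∀ j, ∃ x : V, gdeg X₁ x = d j)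
    (s : Fin k → ℕ) (t₁ t₂ : V → ℕ)
    (ht₁ : ∀ (x : V) (j : Fin k), gdeg X₁ x = d j → t₁ x = s j)
    (ht₂ : ∀ (x : V) (j : Fin k), gdeg X₂ x = d j → t₂ x = s j) :
    DegreeSimilar (addPendants X₁ t₁) (addPendants X₂ t₂) := by
  classical
  obtain ⟨e, M, hM, hA, hD⟩ := h
  have hdet : IsUnit M.det := (Matrix.isUnit_iff_isUnit_det M).mp hM
  have hMM : M * M⁻¹ = 1 := Matrix.mul_nonsing_inv M hdet
  have hMM' : M⁻¹ * M = 1 := Matrix.nonsing_inv_mul M hdet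
  have hsub : (degMat X₂).submatrix ⇑e ⇑e
      = Matrix.diagonal (fun v => (gdeg X₂ (e v) : ℝ)) := by
    ext a b
    rcases eq_or_ne a b with rfl | hab
    · simp [degMat]
    · simp [degMat, Matrix.diagonal_apply_ne _ hab,
        Matrix.diagonal_apply_ne _ (fun hh => hab (e.injective hh))]
  have hD' : M⁻¹ * degMat X₁ * M = Matrix.diagonal (fun v => (gdeg X₂ (e v) : ℝ)) := by
    rw [hD, hsub]
  have hDM : degMat X₁ * M = M * Matrix.diagonal (fun v => (gdeg X₂ (e v) : ℝ)) := by
    rw [← hD']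
    rw [← Matrix.mul_assoc, ← Matrix.mul_assoc, hMM, Matrix.one_mul]
  have hDM' : M⁻¹ * degMat X₁ = Matrix.diagonal (fun v => (gdeg X₂ (e v) : ℝ)) * M⁻¹ := by
    have h2 : M⁻¹ * degMat X₁ = (M⁻¹ * degMat X₁ * M) * M⁻¹ := by
      rw [Matrix.mul_assoc (M⁻¹ * degMat X₁), hMM, Matrix.mul_one]
    rw [h2, hD']
  -- entrywise consequences
  have key1 : ∀ x y, M x y ≠ 0 → gdeg X₁ x = gdeg X₂ (e y) := by
    intro x y hxy
    have h1 : (degMat X₁ * M) x y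
        = (M * Matrix.diagonal (fun v => (gdeg X₂ (e v) : ℝ))) x y := by rw [hDM]
    rw [degMat, Matrix.diagonal_mul, Matrix.mul_diagonal] at h1
    have h2 : ((gdeg X₁ x : ℝ)) = gdeg X₂ (e y) :=
      mul_right_cancel₀ hxy (h1.trans (mul_comm _ _))
    exact_mod_cast h2
  have key2 : ∀ y x, M⁻¹ y x ≠ 0 → gdeg X₁ x = gdeg X₂ (e y) := by
    intro y x hyx
    have h1 : (M⁻¹ * degMat X₁) y x
        = (Matrix.diagonal (fun v => (gdeg X₂ (e v) : ℝ)) * M⁻¹) y x := by rw [hDM']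
    rw [degMat, Matrix.mul_diagonal, Matrix.diagonal_mul] at h1
    have h2 : ((gdeg X₁ x : ℝ)) = gdeg X₂ (e y) :=
      mul_left_cancel₀ hyx (h1.trans (mul_comm _ _))
    exact_mod_cast h2
  -- class functions
  have htt : ∀ x w, gdeg X₁ x = gdeg X₁ w → t₁ x = t₁ w := by
    intro x w hxw
    obtain ⟨j, hj⟩ := hall x
    obtain ⟨j', hj'⟩ := hall w
    have hjj : j = j' := hinj (by rw [← hj, ← hj', hxw])
    rw [ht₁ x j hj, ht₁ w j' hj', hjj]
  have hts : ∀ x y, gdeg X₁ x = gdeg X₂ (e y) → t₁ x = t₂ (e y) := by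
    intro x y hxy
    obtain ⟨j, hj⟩ := hall x
    rw [ht₁ x j hj, ht₂ (e y) j (by rw [← hxy, hj])]
  -- the degree-matching permutation
  obtain ⟨π, hπ⟩ := exists_perm_of_diag_conj (fun v => (gdeg X₁ v : ℝ))
    (fun v => (gdeg X₂ (e v) : ℝ)) M hM (by rw [show Matrix.diagonal (fun v => (gdeg X₁ v : ℝ)) = degMat X₁ from rfl, hDM])
  have hπ' : ∀ v, gdeg X₂ (e (π v)) = gdeg X₁ v := fun v => by exact_mod_cast hπ v
  have htπ : ∀ v, t₂ (e (π v)) = t₁ v := fun v => (hts v (π v) (hπ' v).symm).symm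
  have hMπ : ∀ x w, t₁ x ≠ t₁ w → M x (π w) = 0 := by
    intro x w hxw
    by_contra hc
    exact hxw (htt x w ((key1 x (π w) hc).trans (hπ' w)))
  have hMπ' : ∀ v x, t₁ v ≠ t₁ x → M⁻¹ (π v) x = 0 := by
    intro v x hvx
    by_contra hc
    exact hvx (htt v x (((key2 (π v) x hc).trans (hπ' v)).symm))
  -- the pendant part of the conjugating matrix and its inverse
  set R : Matrix (Σ v : V, Fin (t₁ v)) (Σ v : V, Fin (t₁ v)) ℝ :=
    Matrix.of fun p q => if (p.2 : ℕ) = (q.2 : ℕ) then M p.1 (π q.1) else 0 with hRdef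
  set S : Matrix (Σ v : V, Fin (t₁ v)) (Σ v : V, Fin (t₁ v)) ℝ :=
    Matrix.of fun p q => if (p.2 : ℕ) = (q.2 : ℕ) then M⁻¹ (π p.1) q.1 else 0 with hSdef
  have hRS : R * S = 1 := by
    ext ⟨v, i⟩ ⟨u, m⟩
    rw [Matrix.mul_apply, ← Finset.univ_sigma_univ, Finset.sum_sigma]
    have hterm : ∀ w : V, (∑ l : Fin (t₁ w),
        R ⟨v, i⟩ ⟨w, l⟩ * S ⟨w, l⟩ ⟨u, m⟩)
        = if (i : ℕ) = (m : ℕ) then M v (π w) * M⁻¹ (π w) u else 0 := by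
      intro w
      by_cases him : (i : ℕ) = (m : ℕ)
      · rw [if_pos him]
        have hl : ∀ l : Fin (t₁ w), R ⟨v, i⟩ ⟨w, l⟩ * S ⟨w, l⟩ ⟨u, m⟩
            = if (l : ℕ) = (i : ℕ) then M v (π w) * M⁻¹ (π w) u else 0 := by
          intro l
          rw [hRdef, hSdef]
          simp only [Matrix.of_apply]
          by_cases hli : (l : ℕ) = (i : ℕ)
          · rw [if_pos hli, if_pos hli.symm, if_pos (hli.trans him)]
          · rw [if_neg hli, if_neg (fun hh => hli hh.symm), zero_mul]
        rw [Finset.sum_congr rfl (fun l _ => hl l), sum_fin_ite]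
        by_cases hiw : (i : ℕ) < t₁ w
        · rw [if_pos hiw]
        · rw [if_neg hiw, hMπ v w (by have := i.2; omega), zero_mul]
      · rw [if_neg him]
        apply Finset.sum_eq_zero
        intro l _
        rw [hRdef, hSdef]
        simp only [Matrix.of_apply]
        by_cases hil : (i : ℕ) = (l : ℕ)
        · rw [if_neg (show ¬ ((l : ℕ) = (m : ℕ)) by omega), mul_zero]
        · rw [if_neg hil, zero_mul]
    rw [Finset.sum_congr rfl (fun w _ => hterm w)]
    by_cases him : (i : ℕ) = (m : ℕ)
    · simp only [if_pos him]
      have hsum : (∑ w, M v (π w) * M⁻¹ (π w) u) = (M * M⁻¹) v u := by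
        rw [Matrix.mul_apply]
        exact Fintype.sum_equiv π _ _ (fun w => rfl)
      rw [hsum, hMM]
      rcases eq_or_ne v u with rfl | hvu
      · have : i = m := Fin.val_injective him
        subst this
        rw [Matrix.one_apply_eq, Matrix.one_apply_eq]
      · rw [Matrix.one_apply_ne hvu,
          Matrix.one_apply_ne (fun hh => hvu (congrArg Sigma.fst hh))]
    · simp only [if_neg him, Finset.sum_const_zero]
      rw [Matrix.one_apply_ne (fun hh => him (congrArg (fun p => ((p.2 : ℕ) : ℕ)) hh))]
  have hSR : S * R = 1 := mul_eq_one_comm.mp hRS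
  -- the pendant equivalence
  set g : (Σ v : V, Fin (t₁ v)) ≃ (Σ v : V, Fin (t₂ v)) :=
    sigmaFinEquiv (π.trans e) htπ with hgdef
  -- block identities for the B-part
  have hB1 : pendB t₁ * R = M * ((pendB t₂).submatrix ⇑e ⇑g) := by
    ext x ⟨w, l⟩
    rw [Matrix.mul_apply, ← Finset.univ_sigma_univ, Finset.sum_sigma]
    have hterm : ∀ v : V, (∑ i : Fin (t₁ v), pendB t₁ x ⟨v, i⟩ * R ⟨v, i⟩ ⟨w, l⟩)
        = if x = v then (if (l : ℕ) < t₁ v then M v (π w) else 0) else 0 := by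
      intro v
      rcases eq_or_ne x v with rfl | hxv
      · rw [if_pos rfl]
        have hl : ∀ i : Fin (t₁ x), pendB t₁ x ⟨x, i⟩ * R ⟨x, i⟩ ⟨w, l⟩
            = if (i : ℕ) = (l : ℕ) then M x (π w) else 0 := by
          intro i
          rw [hRdef]
          simp [pendB]
        rw [Finset.sum_congr rfl (fun i _ => hl i), sum_fin_ite]
      · rw [if_neg hxv]
        apply Finset.sum_eq_zero
        intro i _
        simp [pendB, hxv]
    rw [Finset.sum_congr rfl (fun v _ => hterm v), Finset.sum_ite_eq]
    simp only [Finset.mem_univ, if_true]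
    have hLHS : (if (l : ℕ) < t₁ x then M x (π w) else 0) = M x (π w) := by
      by_cases hlx : (l : ℕ) < t₁ x
      · rw [if_pos hlx]
      · rw [if_neg hlx, hMπ x w (by have := l.2; omega)]
    rw [hLHS, Matrix.mul_apply]
    have hRHS : ∀ y : V, M x y * (pendB t₂).submatrix (⇑e) (⇑g) y ⟨w, l⟩
        = if y = π w then M x y else 0 := by
      intro y
      rw [Matrix.submatrix_apply, hgdef]
      simp only [sigmaFinEquiv_apply, pendB, Matrix.of_apply, Equiv.trans_apply]
      rw [show ((sigmaFinEquiv (π.trans e) htπ) ⟨w, l⟩).fst = e (π w) from rfl]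
      rw [show (e y = e (π w)) = (y = π w) from propext (Equiv.apply_eq_iff_eq e)]
      by_cases hy : y = π w
      · rw [if_pos hy, if_pos hy, mul_one]
      · rw [if_neg hy, if_neg hy, mul_zero]
    rw [Finset.sum_congr rfl (fun y _ => hRHS y), Finset.sum_ite_eq']
    simp
  have hC1 : S * (pendB t₁)ᵀ = ((pendB t₂)ᵀ).submatrix ⇑g ⇑e * M⁻¹ := by
    ext ⟨v, i⟩ x
    rw [Matrix.mul_apply, ← Finset.univ_sigma_univ, Finset.sum_sigma]
    have hterm : ∀ w : V, (∑ l : Fin (t₁ w), S ⟨v, i⟩ ⟨w, l⟩ * (pendB t₁)ᵀ ⟨w, l⟩ x)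
        = if x = w then (if (i : ℕ) < t₁ w then M⁻¹ (π v) w else 0) else 0 := by
      intro w
      rcases eq_or_ne x w with rfl | hxw
      · rw [if_pos rfl]
        have hl : ∀ l : Fin (t₁ x), S ⟨v, i⟩ ⟨x, l⟩ * (pendB t₁)ᵀ ⟨x, l⟩ x
            = if (l : ℕ) = (i : ℕ) then M⁻¹ (π v) x else 0 := by
          intro l
          rw [hSdef]
          simp [pendB, Matrix.transpose_apply, eq_comm (a := (i : ℕ))]
        rw [Finset.sum_congr rfl (fun l _ => hl l), sum_fin_ite]
      · rw [if_neg hxw]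
        apply Finset.sum_eq_zero
        intro l _
        simp [pendB, Matrix.transpose_apply, hxw]
    rw [Finset.sum_congr rfl (fun w _ => hterm w), Finset.sum_ite_eq]
    simp only [Finset.mem_univ, if_true]
    have hLHS : (if (i : ℕ) < t₁ x then M⁻¹ (π v) x else 0) = M⁻¹ (π v) x := by
      by_cases hix : (i : ℕ) < t₁ x
      · rw [if_pos hix]
      · rw [if_neg hix, hMπ' v x (by have := i.2; omega)]
    rw [hLHS, Matrix.mul_apply]
    have hRHS : ∀ y : V, ((pendB t₂)ᵀ).submatrix (⇑g) (⇑e) ⟨v, i⟩ y * M⁻¹ y x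
        = if y = π v then M⁻¹ y x else 0 := by
      intro y
      rw [Matrix.submatrix_apply, hgdef]
      simp only [sigmaFinEquiv_apply, pendB, Matrix.transpose_apply, Matrix.of_apply,
        Equiv.trans_apply]
      rw [show ((sigmaFinEquiv (π.trans e) htπ) ⟨v, i⟩).fst = e (π v) from rfl]
      rw [show (e y = e (π v)) = (y = π v) from propext (Equiv.apply_eq_iff_eq e)]
      by_cases hy : y = π v
      · rw [if_pos hy, if_pos hy, one_mul]
      · rw [if_neg hy, if_neg hy, zero_mul]
    rw [Finset.sum_congr rfl (fun y _ => hRHS y), Finset.sum_ite_eq']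
    simp
  -- diagonal pendant-count identity
  have hT : Matrix.diagonal (fun v => (t₁ v : ℝ)) * M
      = M * Matrix.diagonal (fun v => (t₂ (e v) : ℝ)) := by
    ext x y
    rw [Matrix.diagonal_mul, Matrix.mul_diagonal]
    by_cases hxy : M x y = 0
    · rw [hxy, mul_zero, zero_mul]
    · have hxy2 : t₁ x = t₂ (e y) := hts x y (key1 x y hxy)
      rw [hxy2]
      exact mul_comm _ _
  -- assemble
  have hMN : Matrix.fromBlocks M 0 0 R * Matrix.fromBlocks M⁻¹ 0 0 S = 1 := by
    rw [Matrix.fromBlocks_multiply]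
    simp only [Matrix.mul_zero, Matrix.zero_mul, add_zero, zero_add, hMM, hRS]
    exact Matrix.fromBlocks_one
  have hNM : Matrix.fromBlocks M⁻¹ 0 0 S * Matrix.fromBlocks M 0 0 R = 1 := by
    rw [Matrix.fromBlocks_multiply]
    simp only [Matrix.mul_zero, Matrix.zero_mul, add_zero, zero_add, hMM', hSR]
    exact Matrix.fromBlocks_one
  have hinv : (Matrix.fromBlocks M 0 0 R)⁻¹ = Matrix.fromBlocks M⁻¹ 0 0 S :=
    Matrix.inv_eq_right_inv hMN
  have hcoe : ⇑(Equiv.sumCongr e g) = Sum.map ⇑e ⇑g := by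
    funext x
    exact Equiv.sumCongr_apply e g x
  have hB : M⁻¹ * pendB t₁ * R = (pendB t₂).submatrix ⇑e ⇑g := by
    rw [Matrix.mul_assoc, hB1, ← Matrix.mul_assoc, hMM', Matrix.one_mul]
  have hC : S * (pendB t₁)ᵀ * M = ((pendB t₂)ᵀ).submatrix ⇑g ⇑e := by
    rw [hC1, Matrix.mul_assoc, hMM', Matrix.mul_one]
  have hDeg : M⁻¹ * Matrix.diagonal (fun v => ((gdeg X₁ v : ℝ) + t₁ v)) * M
      = Matrix.diagonal (fun v => ((gdeg X₂ (e v) : ℝ) + t₂ (e v))) := by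
    have e1 : Matrix.diagonal (fun v => ((gdeg X₁ v : ℝ) + t₁ v))
        = degMat X₁ + Matrix.diagonal (fun v => (t₁ v : ℝ)) := by
      rw [degMat]
      exact (Matrix.diagonal_add _ _).symm
    have e2 : Matrix.diagonal (fun v => ((gdeg X₂ (e v) : ℝ) + t₂ (e v)))
        = Matrix.diagonal (fun v => (gdeg X₂ (e v) : ℝ))
          + Matrix.diagonal (fun v => (t₂ (e v) : ℝ)) := (Matrix.diagonal_add _ _).symm
    have e3 : M⁻¹ * Matrix.diagonal (fun v => (t₁ v : ℝ)) * M
        = Matrix.diagonal (fun v => (t₂ (e v) : ℝ)) := by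
      rw [Matrix.mul_assoc, hT, ← Matrix.mul_assoc, hMM', Matrix.one_mul]
    rw [e1, e2, Matrix.mul_add, Matrix.add_mul, hD', e3]
  refine ⟨Equiv.sumCongr e g, Matrix.fromBlocks M 0 0 R, ⟨⟨_, _, hMN, hNM⟩, rfl⟩, ?_, ?_⟩
  · rw [hinv, adjMat_addPendants, adjMat_addPendants, hcoe, fromBlocks_submatrix,
      Matrix.fromBlocks_multiply, Matrix.fromBlocks_multiply]
    simp only [Matrix.mul_zero, Matrix.zero_mul, add_zero, zero_add, Matrix.submatrix_zero]
    rw [hA, hB, hC]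
    rfl
  · rw [hinv, degMat_addPendants, degMat_addPendants, hcoe, fromBlocks_submatrix,
      Matrix.fromBlocks_multiply, Matrix.fromBlocks_multiply]
    simp only [Matrix.mul_zero, Matrix.zero_mul, add_zero, zero_add, Matrix.submatrix_zero,
      Matrix.mul_one]
    rw [hDeg, hSR, diagonal_submatrix_equiv, Matrix.submatrix_one_equiv]
    rfl
end

section
/- Let X₁ and X₂ be degree-similar finite simple graphs. For i ∈ {1,2} choose uᵢ ∈ V(Xᵢ) such that: (i) no other vertex of Xᵢ has the same degree as uᵢ in Xᵢ; (ii) deg_{X₁}(u₁) = deg_{X₂}(u₂); and (iii) for every neighbor w of u₁ in X₁, every vertex w′ of X₁ with deg_{X₁}(w′) = deg_{X₁}(w) is also a neighbor of u₁. Then the vertex-deleted subgraphs X₁ ∖ u₁ and X₂ ∖ u₂ are degree similar. -/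
open Matrix

open Classical in
lemma gdeg_sum {V : Type*} [Fintype V] (G : SimpleGraph V) (v : V) :
    (gdeg G v : ℝ) = ∑ w : V, if G.Adj v w then (1:ℝ) else 0 := by
  rw [Finset.sum_boole]
  unfold gdeg
  rw [SimpleGraph.neighborSet, Nat.card_eq_fintype_card, Fintype.card_subtype]
  norm_num

open Classical in
lemma gdeg_induce {V : Type*} [Fintype V] [DecidableEq V] (G : SimpleGraph V) (u : V)
    (w : V) (hw : w ≠ u) :
    (gdeg (G.induce {x | x ≠ u}) ⟨w, hw⟩ : ℝ) = (gdeg G w : ℝ) - (if G.Adj u w then 1 else 0) := by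
  have e1 : gdeg (G.induce {x | x ≠ u}) ⟨w, hw⟩
      = Fintype.card {v : V // v ≠ u ∧ G.Adj w v} := by
    unfold gdeg
    rw [← Nat.card_eq_fintype_card]
    apply Nat.card_congr
    refine (Equiv.subtypeEquivRight ?_).trans (Equiv.subtypeSubtypeEquivSubtypeInter _ _)
    intro b
    simp [SimpleGraph.neighborSet]
  rw [e1, Fintype.card_subtype]
  have e2 : (gdeg G w : ℝ) = ((Finset.univ.filter (fun v => G.Adj w v)).card : ℝ) := by
    rw [gdeg_sum G w, Finset.sum_boole]
  rw [e2]
  by_cases hadj : G.Adj u w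
  · have hmem : u ∈ Finset.univ.filter (fun v => G.Adj w v) := by
      simp [hadj.symm]
    have : Finset.univ.filter (fun v => v ≠ u ∧ G.Adj w v)
        = (Finset.univ.filter (fun v => G.Adj w v)).erase u := by
      ext v; simp [and_comm]
    rw [this, if_pos hadj, Finset.card_erase_of_mem hmem]
    have hpos : 0 < (Finset.univ.filter (fun v => G.Adj w v)).card :=
      Finset.card_pos.mpr ⟨u, hmem⟩
    rw [Nat.cast_sub (by omega)]
    push_cast
    ring
  · have : Finset.univ.filter (fun v => v ≠ u ∧ G.Adj w v)
        = Finset.univ.filter (fun v => G.Adj w v) := by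
      ext v
      simp only [Finset.mem_filter, Finset.mem_univ, true_and]
      constructor
      · exact fun h => h.2
      · intro h
        refine ⟨fun hv => hadj ?_, h⟩
        subst hv; exact h.symm
    rw [this, if_neg hadj, sub_zero]

open Classical in
lemma adjMat_induce {V : Type*} (G : SimpleGraph V) (s : Set V) (a b : ↥s) :
    adjMat (G.induce s) a b = adjMat G a.1 b.1 := by
  simp only [adjMat, Matrix.of_apply]
  congr 1

open Classical in
lemma sum_subtype_ne {V : Type*} [Fintype V] [DecidableEq V] (u : V) (F : V → ℝ)
    (h0 : F u = 0) : ∑ v : ↥{x | x ≠ u}, F v.1 = ∑ v : V, F v := by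
  rw [← Finset.sum_subtype (Finset.univ.erase u) (fun x => by simp) F]
  exact Finset.sum_erase _ h0

open Classical in
/-- Let `X₁, X₂` be degree similar, and for `i = 1, 2` let `uᵢ` be a vertex of `Xᵢ`
such that: no other vertex of `Xᵢ` has the same degree as `uᵢ`; the degrees of `u₁`
and `u₂` agree; and the neighbourhood of `u₁` in `X₁` is a union of degree classes.
Then the vertex-deleted subgraphs `X₁ ∖ u₁` and `X₂ ∖ u₂` are degree similar. -/
theorem degreeSimilar_deleteVertex {V : Type*} [Fintype V] [DecidableEq V]
    (X₁ X₂ : SimpleGraph V) (h : DegreeSimilar X₁ X₂) (u₁ u₂ : V)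
    (h1 : ∀ x : V, gdeg X₁ x = gdeg X₁ u₁ → x = u₁)
    (h1' : ∀ x : V, gdeg X₂ x = gdeg X₂ u₂ → x = u₂)
    (h2 : gdeg X₁ u₁ = gdeg X₂ u₂)
    (h3 : ∀ w : V, X₁.Adj u₁ w → ∀ w' : V, gdeg X₁ w' = gdeg X₁ w → X₁.Adj u₁ w') :
    DegreeSimilar (X₁.induce {x | x ≠ u₁}) (X₂.induce {x | x ≠ u₂}) := by
  classical
  obtain ⟨e, M, hM, hA, hD⟩ := h
  have hdet : IsUnit M.det := (Matrix.isUnit_iff_isUnit_det M).mp hM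
  set v₀ : V := e.symm u₂ with hv₀def
  have hev₀ : e v₀ = u₂ := e.apply_symm_apply u₂
  set d₁ : V → ℝ := fun p => (gdeg X₁ p : ℝ) with hd₁def
  set d₂ : V → ℝ := fun q => (gdeg X₂ (e q) : ℝ) with hd₂def
  -- diagonal form of the degree-matrix conjugation
  have hDdiag : M⁻¹ * Matrix.diagonal d₁ * M = Matrix.diagonal d₂ := by
    have h₂ : (degMat X₂).submatrix ⇑e ⇑e = Matrix.diagonal d₂ := by
      rw [degMat, Matrix.submatrix_diagonal _ _ e.injective]
      rfl
    have h₁ : degMat X₁ = Matrix.diagonal d₁ := rfl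
    rw [← h₂, ← h₁]
    exact hD
  have hDM : Matrix.diagonal d₁ * M = M * Matrix.diagonal d₂ := by
    have := congrArg (fun X => M * X) hDdiag
    simpa [← Matrix.mul_assoc, Matrix.mul_nonsing_inv M hdet] using this
  have key : ∀ p q, M p q ≠ 0 → d₁ p = d₂ q := by
    intro p q hne
    have := congrFun (congrFun hDM p) q
    rw [Matrix.diagonal_mul, Matrix.mul_diagonal] at this
    have h'' : d₁ p * M p q = d₂ q * M p q := by linear_combination this
    exact mul_right_cancel₀ hne h''
  have hiDM : M⁻¹ * Matrix.diagonal d₁ = Matrix.diagonal d₂ * M⁻¹ := by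
    have := congrArg (fun X => X * M⁻¹) hDdiag
    simpa [Matrix.mul_assoc, Matrix.mul_nonsing_inv M hdet] using this
  have keyi : ∀ p q, M⁻¹ q p ≠ 0 → d₁ p = d₂ q := by
    intro p q hne
    have := congrFun (congrFun hiDM q) p
    rw [Matrix.mul_diagonal, Matrix.diagonal_mul] at this
    have h'' : d₁ p * M⁻¹ q p = d₂ q * M⁻¹ q p := by linear_combination this
    exact mul_right_cancel₀ hne h''
  have keyN : ∀ p q, M p q ≠ 0 → gdeg X₁ p = gdeg X₂ (e q) := fun p q hne =>
    Nat.cast_injective (key p q hne)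
  have keyiN : ∀ p q, M⁻¹ q p ≠ 0 → gdeg X₁ p = gdeg X₂ (e q) := fun p q hne =>
    Nat.cast_injective (keyi p q hne)
  -- zero structure
  have hrow : ∀ q, q ≠ v₀ → M u₁ q = 0 := by
    intro q hq
    by_contra hne
    have h' : gdeg X₂ (e q) = gdeg X₂ u₂ := by rw [← keyN u₁ q hne, h2]
    have : e q = u₂ := h1' (e q) h'
    exact hq (by rw [hv₀def, ← this, Equiv.symm_apply_apply])
  have hcol : ∀ p, p ≠ u₁ → M p v₀ = 0 := by
    intro p hp
    by_contra hne
    have h' : gdeg X₁ p = gdeg X₁ u₁ := by rw [keyN p v₀ hne, hev₀, h2]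
    exact hp (h1 p h')
  have hirow : ∀ p, p ≠ u₁ → M⁻¹ v₀ p = 0 := by
    intro p hp
    by_contra hne
    have h' : gdeg X₁ p = gdeg X₁ u₁ := by rw [keyiN p v₀ hne, hev₀, h2]
    exact hp (h1 p h')
  have hicol : ∀ q, q ≠ v₀ → M⁻¹ q u₁ = 0 := by
    intro q hq
    by_contra hne
    have h' : gdeg X₂ (e q) = gdeg X₂ u₂ := by rw [← keyiN u₁ q hne, h2]
    have : e q = u₂ := h1' (e q) h'
    exact hq (by rw [hv₀def, ← this, Equiv.symm_apply_apply])
  -- the corner entry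
  have hc1 : M⁻¹ v₀ u₁ * M u₁ v₀ = 1 := by
    have h1m : (M⁻¹ * M) v₀ v₀ = 1 := by
      rw [Matrix.nonsing_inv_mul M hdet, Matrix.one_apply_eq]
    rw [Matrix.mul_apply] at h1m
    have hs : ∑ j : V, M⁻¹ v₀ j * M j v₀ = M⁻¹ v₀ u₁ * M u₁ v₀ :=
      Finset.sum_eq_single u₁ (fun b _ hb => by rw [hirow b hb, zero_mul])
        (fun hu => absurd (Finset.mem_univ u₁) hu)
    rw [← hs]
    exact h1m
  have hc0 : M u₁ v₀ ≠ 0 := by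
    intro h0
    rw [h0, mul_zero] at hc1
    exact zero_ne_one hc1
  -- the degree-class indicator function
  set g : ℝ → ℝ := fun t => if ∃ w, (gdeg X₁ w : ℝ) = t ∧ X₁.Adj u₁ w then 1 else 0 with hgdef
  have hg01 : ∀ t, g t = 0 ∨ g t = 1 := by
    intro t
    rw [hgdef]
    by_cases h' : ∃ w, (gdeg X₁ w : ℝ) = t ∧ X₁.Adj u₁ w
    · right; simp [h']
    · left; simp [h']
  have hg1 : ∀ w : V, g (d₁ w) = if X₁.Adj u₁ w then 1 else 0 := by
    intro w
    by_cases hadj : X₁.Adj u₁ w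
    · rw [if_pos hadj, hgdef]
      exact if_pos ⟨w, rfl, hadj⟩
    · rw [if_neg hadj, hgdef]
      apply if_neg
      rintro ⟨w', hw', hadj'⟩
      exact hadj (h3 w' hadj' w (Nat.cast_injective hw').symm)
  -- conjugation transports g-diagonals and f-diagonals
  have hgDM : Matrix.diagonal (fun p => g (d₁ p)) * M
      = M * Matrix.diagonal (fun q => g (d₂ q)) := by
    ext p q
    rw [Matrix.diagonal_mul, Matrix.mul_diagonal]
    by_cases h0 : M p q = 0
    · rw [h0, mul_zero, zero_mul]
    · rw [key p q h0]; ring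
  have hgconj : M⁻¹ * Matrix.diagonal (fun p => g (d₁ p)) * M
      = Matrix.diagonal (fun q => g (d₂ q)) := by
    rw [Matrix.mul_assoc, hgDM, ← Matrix.mul_assoc, Matrix.nonsing_inv_mul M hdet,
      Matrix.one_mul]
  -- trace argument
  have htrace : ∑ p : V, g (d₁ p) = ∑ q : V, g (d₂ q) := by
    calc ∑ p : V, g (d₁ p)
        = (Matrix.diagonal (fun p => g (d₁ p))).trace := (Matrix.trace_diagonal _).symm
      _ = (M * M⁻¹ * Matrix.diagonal (fun p => g (d₁ p))).trace := by
          rw [Matrix.mul_nonsing_inv M hdet, Matrix.one_mul]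
      _ = ((M⁻¹ * Matrix.diagonal (fun p => g (d₁ p))) * M).trace := by
          rw [Matrix.mul_assoc, Matrix.trace_mul_comm]
      _ = (Matrix.diagonal (fun q => g (d₂ q))).trace := by
          rw [← hgconj, Matrix.mul_assoc]
      _ = ∑ q : V, g (d₂ q) := Matrix.trace_diagonal _
  have hSum1 : ∑ p : V, g (d₁ p) = (gdeg X₁ u₁ : ℝ) := by
    rw [gdeg_sum X₁ u₁]
    exact Finset.sum_congr rfl (fun p _ => hg1 p)
  have hSum2 : ∑ q : V, g (d₂ q) = ∑ x : V, g ((gdeg X₂ x : ℝ)) :=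
    Fintype.sum_equiv e _ _ (fun q => rfl)
  -- algebraic direction: neighbours of u₂ lie in the right degree classes
  have halg : ∀ q : V, X₂.Adj u₂ (e q) → g (d₂ q) = 1 := by
    intro q hadj
    have hMA : M * ((adjMat X₂).submatrix ⇑e ⇑e) = adjMat X₁ * M := by
      rw [← hA, ← Matrix.mul_assoc, ← Matrix.mul_assoc,
        Matrix.mul_nonsing_inv M hdet, Matrix.one_mul]
    have hentry := congrFun (congrFun hMA u₁) q
    rw [Matrix.mul_apply, Matrix.mul_apply] at hentry
    have hL : ∑ r, M u₁ r * ((adjMat X₂).submatrix ⇑e ⇑e) r q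
        = M u₁ v₀ * (if X₂.Adj u₂ (e q) then (1:ℝ) else 0) := by
      rw [Finset.sum_eq_single v₀ (fun b _ hb => by rw [hrow b hb, zero_mul])
        (fun hu => absurd (Finset.mem_univ v₀) hu)]
      simp [adjMat, hev₀]
    have hR : ∑ p, adjMat X₁ u₁ p * M p q = g (d₂ q) * ∑ p, M p q := by
      rw [Finset.mul_sum]
      apply Finset.sum_congr rfl
      intro p _
      have h1p : adjMat X₁ u₁ p = g (d₁ p) := (hg1 p).symm
      by_cases h0 : M p q = 0
      · rw [h0, mul_zero, mul_zero]
      · rw [h1p, key p q h0]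
    rw [hL, hR, if_pos hadj, mul_one] at hentry
    rcases hg01 (d₂ q) with h0 | h1
    · exfalso
      rw [h0, zero_mul] at hentry
      exact hc0 hentry
    · exact h1
  -- pointwise equality : adjacency to u₂ is given by g
  have hpt : ∀ x : V, (if X₂.Adj u₂ x then (1:ℝ) else 0) = g ((gdeg X₂ x : ℝ)) := by
    have hle : ∀ x ∈ Finset.univ,
        (if X₂.Adj u₂ x then (1:ℝ) else 0) ≤ g ((gdeg X₂ x : ℝ)) := by
      intro x _
      by_cases hadj : X₂.Adj u₂ x
      · rw [if_pos hadj]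
        have h' := halg (e.symm x) (by rwa [e.apply_symm_apply])
        have hdd : d₂ (e.symm x) = ((gdeg X₂ x : ℝ)) := by
          rw [hd₂def]; simp
        rw [hdd] at h'
        rw [h']
      · rw [if_neg hadj]
        rcases hg01 ((gdeg X₂ x : ℝ)) with h0 | h1
        · rw [h0]
        · rw [h1]; norm_num
    have hsum : ∑ x : V, (if X₂.Adj u₂ x then (1:ℝ) else 0)
        = ∑ x : V, g ((gdeg X₂ x : ℝ)) := by
      rw [← gdeg_sum X₂ u₂, ← hSum2, ← htrace, hSum1]
      exact_mod_cast congrArg (Nat.cast : ℕ → ℝ) h2.symm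
    intro x
    exact (Finset.sum_eq_sum_iff_of_le hle).mp hsum x (Finset.mem_univ x)
  -- reduced degree formulas
  have hdeg1' : ∀ (w : V) (hw : w ≠ u₁),
      (gdeg (X₁.induce {x | x ≠ u₁}) ⟨w, hw⟩ : ℝ) = d₁ w - g (d₁ w) := by
    intro w hw
    rw [gdeg_induce X₁ u₁ w hw, hg1 w]
  have hdeg2' : ∀ (x : V) (hx : x ≠ u₂),
      (gdeg (X₂.induce {x | x ≠ u₂}) ⟨x, hx⟩ : ℝ)
        = (gdeg X₂ x : ℝ) - g ((gdeg X₂ x : ℝ)) := by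
    intro x hx
    rw [gdeg_induce X₂ u₂ x hx, hpt x]
  -- f-diagonal transport
  set f : ℝ → ℝ := fun t => t - g t with hfdef
  have hfDM : Matrix.diagonal (fun p => f (d₁ p)) * M
      = M * Matrix.diagonal (fun q => f (d₂ q)) := by
    ext p q
    rw [Matrix.diagonal_mul, Matrix.mul_diagonal]
    by_cases h0 : M p q = 0
    · rw [h0, mul_zero, zero_mul]
    · rw [key p q h0]; ring
  -- the equivalences
  have hswap : ∀ x : V, x ∈ {x | x ≠ u₁} ↔ (Equiv.swap u₁ v₀) x ∈ {x | x ≠ v₀} := by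
    intro x
    simp only [Set.mem_setOf_eq, ne_eq, not_iff_not]
    constructor
    · intro hx; rw [hx, Equiv.swap_apply_left]
    · intro hx
      have := congrArg (Equiv.swap u₁ v₀) hx
      rwa [Equiv.swap_apply_self, Equiv.swap_apply_right] at this
  set φ : ↥{x | x ≠ u₁} ≃ ↥{x | x ≠ v₀} := (Equiv.swap u₁ v₀).subtypeEquiv hswap with hφdef
  have heiff : ∀ x : V, x ∈ {x | x ≠ v₀} ↔ e x ∈ {x | x ≠ u₂} := by
    intro x
    simp only [Set.mem_setOf_eq, ne_eq, not_iff_not]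
    constructor
    · intro hx; rw [hx, hev₀]
    · intro hx; apply e.injective; rw [hx, hev₀]
  set e' : ↥{x | x ≠ u₁} ≃ ↥{x | x ≠ u₂} := φ.trans (e.subtypeEquiv heiff) with he'def
  have hφne : ∀ a : ↥{x | x ≠ u₁}, (φ a).1 ≠ v₀ := fun a => (φ a).2
  have hane : ∀ a : ↥{x | x ≠ u₁}, a.1 ≠ u₁ := fun a => a.2
  -- the matrices
  set M' : Matrix ↥{x | x ≠ u₁} ↥{x | x ≠ u₁} ℝ :=
    Matrix.of (fun a b => M a.1 (φ b).1) with hM'def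
  set N' : Matrix ↥{x | x ≠ u₁} ↥{x | x ≠ u₁} ℝ :=
    Matrix.of (fun a b => M⁻¹ (φ a).1 b.1) with hN'def
  have hMN : M' * N' = 1 := by
    ext a b
    rw [Matrix.mul_apply]
    have hre : ∑ v : ↥{x | x ≠ u₁}, M' a v * N' v b
        = ∑ w : ↥{x | x ≠ v₀}, M a.1 w.1 * M⁻¹ w.1 b.1 :=
      Fintype.sum_equiv φ _ _ (fun v => rfl)
    rw [hre, sum_subtype_ne v₀ (fun w => M a.1 w * M⁻¹ w b.1)
      (show M a.1 v₀ * M⁻¹ v₀ b.1 = 0 by rw [hcol a.1 (hane a), zero_mul]), ← Matrix.mul_apply,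
      Matrix.mul_nonsing_inv M hdet]
    by_cases hab : a = b
    · subst hab; rw [Matrix.one_apply_eq, Matrix.one_apply_eq]
    · rw [Matrix.one_apply_ne hab, Matrix.one_apply_ne (fun h' => hab (Subtype.ext h'))]
  have hNM : N' * M' = 1 := by
    ext a b
    rw [Matrix.mul_apply]
    have hre : ∑ v : ↥{x | x ≠ u₁}, N' a v * M' v b
        = ∑ v : ↥{x | x ≠ u₁}, (fun w => M⁻¹ (φ a).1 w * M w (φ b).1) v.1 := rfl
    rw [hre, sum_subtype_ne u₁ (fun w => M⁻¹ (φ a).1 w * M w (φ b).1)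
      (show M⁻¹ (φ a).1 u₁ * M u₁ (φ b).1 = 0 by rw [hicol (φ a).1 (hφne a), zero_mul]),
      ← Matrix.mul_apply, Matrix.nonsing_inv_mul M hdet]
    by_cases hab : a = b
    · subst hab; rw [Matrix.one_apply_eq, Matrix.one_apply_eq]
    · have hφab : (φ a).1 ≠ (φ b).1 := fun h' => hab (φ.injective (Subtype.ext h'))
      rw [Matrix.one_apply_ne hφab, Matrix.one_apply_ne hab]
  have hunit : IsUnit M' := ⟨⟨M', N', hMN, hNM⟩, rfl⟩
  have hMinv : M'⁻¹ = N' := Matrix.inv_eq_right_inv hMN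
  refine ⟨e', M', hunit, ?_, ?_⟩
  · -- adjacency matrices
    rw [hMinv]
    ext a b
    rw [Matrix.mul_assoc, Matrix.mul_apply]
    have step1 : ∀ v : ↥{x | x ≠ u₁},
        (adjMat (X₁.induce {x | x ≠ u₁}) * M') v b = (adjMat X₁ * M) v.1 (φ b).1 := by
      intro v
      rw [Matrix.mul_apply, Matrix.mul_apply]
      have : ∑ w : ↥{x | x ≠ u₁}, adjMat (X₁.induce {x | x ≠ u₁}) v w * M' w b
          = ∑ w : ↥{x | x ≠ u₁}, (fun z => adjMat X₁ v.1 z * M z (φ b).1) w.1 :=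
        Finset.sum_congr rfl (fun w _ => by rw [adjMat_induce]; rfl)
      rw [this, sum_subtype_ne u₁ (fun z => adjMat X₁ v.1 z * M z (φ b).1)
        (show adjMat X₁ v.1 u₁ * M u₁ (φ b).1 = 0 by rw [hrow (φ b).1 (hφne b), mul_zero])]
    have step2 : ∑ v : ↥{x | x ≠ u₁}, N' a v * (adjMat (X₁.induce {x | x ≠ u₁}) * M') v b
        = ∑ v : ↥{x | x ≠ u₁}, (fun z => M⁻¹ (φ a).1 z * (adjMat X₁ * M) z (φ b).1) v.1 :=
      Finset.sum_congr rfl (fun v _ => by rw [step1 v]; rfl)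
    rw [step2, sum_subtype_ne u₁ (fun z => M⁻¹ (φ a).1 z * (adjMat X₁ * M) z (φ b).1)
      (show M⁻¹ (φ a).1 u₁ * (adjMat X₁ * M) u₁ (φ b).1 = 0
        by rw [hicol (φ a).1 (hφne a), zero_mul]),
      ← Matrix.mul_apply, ← Matrix.mul_assoc, hA]
    rw [Matrix.submatrix_apply, Matrix.submatrix_apply]
    exact (adjMat_induce X₂ {x | x ≠ u₂} (e' a) (e' b))
  · -- degree matrices
    rw [hMinv]
    ext a b
    rw [Matrix.mul_assoc, Matrix.mul_apply]
    have step1 : ∀ v : ↥{x | x ≠ u₁},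
        (degMat (X₁.induce {x | x ≠ u₁}) * M') v b = f (d₁ v.1) * M v.1 (φ b).1 := by
      intro v
      rw [degMat, Matrix.diagonal_mul]
      have : (gdeg (X₁.induce {x | x ≠ u₁}) v : ℝ) = f (d₁ v.1) := by
        rw [hfdef]
        have := hdeg1' v.1 v.2
        simpa using this
      rw [this]
      rfl
    have step2 : ∑ v : ↥{x | x ≠ u₁}, N' a v * (degMat (X₁.induce {x | x ≠ u₁}) * M') v b
        = ∑ v : ↥{x | x ≠ u₁}, (fun z => M⁻¹ (φ a).1 z * (f (d₁ z) * M z (φ b).1)) v.1 :=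
      Finset.sum_congr rfl (fun v _ => by rw [step1 v]; rfl)
    rw [step2, sum_subtype_ne u₁ (fun z => M⁻¹ (φ a).1 z * (f (d₁ z) * M z (φ b).1))
      (show M⁻¹ (φ a).1 u₁ * (f (d₁ u₁) * M u₁ (φ b).1) = 0
        by rw [hicol (φ a).1 (hφne a), zero_mul])]
    have step3 : ∑ z : V, M⁻¹ (φ a).1 z * (f (d₁ z) * M z (φ b).1)
        = (M⁻¹ * (Matrix.diagonal (fun p => f (d₁ p)) * M)) (φ a).1 (φ b).1 := by
      rw [Matrix.mul_apply]
      exact Finset.sum_congr rfl (fun z _ => by rw [Matrix.diagonal_mul])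
    rw [step3, hfDM, ← Matrix.mul_assoc, Matrix.nonsing_inv_mul M hdet, Matrix.one_mul]
    rw [Matrix.submatrix_apply, degMat]
    by_cases hab : a = b
    · subst hab
      rw [Matrix.diagonal_apply_eq, Matrix.diagonal_apply_eq]
      have hfd : f (d₂ (φ a).1) = (gdeg X₂ (e (φ a).1) : ℝ) - g ((gdeg X₂ (e (φ a).1) : ℝ)) := by
        rw [hfdef]
      have := hdeg2' (e (φ a).1) (e' a).2
      rw [hfd, ← this]
      rfl
    · have hφab : (φ a).1 ≠ (φ b).1 := fun h' => hab (φ.injective (Subtype.ext h'))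
      have he'ab : e' a ≠ e' b := fun h' => hab (e'.injective h')
      rw [Matrix.diagonal_apply_ne _ hφab, Matrix.diagonal_apply_ne _ he'ab]
end

section
/- Let X₁ and X₂ be finite simple graphs on n vertices with adjacency matrices A₁, A₂ and degree matrices D₁, D₂. If the matrices A₁ − μD₁ and A₂ − μD₂ are similar over the field ℚ(μ) of rational functions (the fraction field of ℚ[μ]), then A₁ and A₂ are similar over ℚ, and D₁ and D₂ are similar over ℚ. -/
open Matrix

open Classical in
/-- The adjacency matrix of a graph, with rational entries. -/
noncomputable def adjMatQ {V : Type*} (G : SimpleGraph V) : Matrix V V ℚ :=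
  Matrix.of fun a b => if G.Adj a b then 1 else 0

/-- The degree matrix of a graph, with rational entries. -/
noncomputable def degMatQ {V : Type*} [DecidableEq V] (G : SimpleGraph V) : Matrix V V ℚ :=
  Matrix.diagonal fun v => (gdeg G v : ℚ)

/-- The field `ℚ(μ)` of rational functions, i.e. the fraction field of `ℚ[μ]`. -/
abbrev RatFuncQ : Type := FractionRing (Polynomial ℚ)

/-- The indeterminate `μ` viewed in `ℚ(μ)`. -/
noncomputable def muQ : RatFuncQ := algebraMap (Polynomial ℚ) RatFuncQ Polynomial.X

/-- The matrix `A(G) - μ D(G)`, regarded as a matrix over `ℚ(μ)`. -/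
noncomputable def AmuQ {V : Type*} [Fintype V] [DecidableEq V] (G : SimpleGraph V) :
    Matrix V V RatFuncQ :=
  (adjMatQ G).map (fun x => algebraMap (Polynomial ℚ) RatFuncQ (Polynomial.C x))
    - muQ • (degMatQ G).map (fun x => algebraMap (Polynomial ℚ) RatFuncQ (Polynomial.C x))


section Helpers

open Polynomial

section
set_option linter.unusedSectionVars false
set_option maxHeartbeats 1000000

variable {V : Type*} [Fintype V] [DecidableEq V] {F : Type*} [Field F]

lemma mapMatrix_eq_map {R S : Type*} [CommRing R] [CommRing S] (f : R →+* S)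
    (M : Matrix V V R) : f.mapMatrix M = M.map f := rfl

lemma conj_of_semiconj {A B N : Matrix V V F} (hN : IsUnit N) (h : A * N = N * B) :
    N⁻¹ * A * N = B := by
  have hd : IsUnit N.det := (Matrix.isUnit_iff_isUnit_det N).mp hN
  rw [mul_assoc, h, ← mul_assoc, Matrix.nonsing_inv_mul _ hd, one_mul]

lemma charpoly_eq_of_semiconj {A B M : Matrix V V F} (hM : IsUnit M)
    (hc : A * M = M * B) : A.charpoly = B.charpoly := by
  have hd : M.det ≠ 0 := ((Matrix.isUnit_iff_isUnit_det M).mp hM).ne_zero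
  have hMc : (M.map (C : F → F[X])).det = C M.det := by
    rw [RingHom.map_det, mapMatrix_eq_map]
  have key : charmatrix A * M.map C = M.map C * charmatrix B := by
    have h1 : (A.map (C : F → F[X])) * M.map C = M.map C * B.map C := by
      have := congrArg (fun (N : Matrix V V F) => N.map (C : F → F[X])) hc
      simpa [Matrix.map_mul] using this
    simp only [charmatrix, sub_mul, mul_sub, RingHom.mapMatrix_apply]
    rw [h1]
    congr 1
    exact (Matrix.scalar_commute (X : F[X]) (fun r' => mul_comm _ _) (M.map C)).eq
  have h2 := congrArg Matrix.det key
  rw [Matrix.det_mul, Matrix.det_mul, hMc] at h2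
  have hC : (C M.det : F[X]) ≠ 0 := by simpa using hd
  refine mul_right_cancel₀ hC ?_
  rw [Matrix.charpoly, Matrix.charpoly, h2, mul_comm]

lemma charpoly_diagonal (f : V → F) :
    (Matrix.diagonal f).charpoly = ∏ v, (X - C (f v)) := by
  have : charmatrix (Matrix.diagonal f) = Matrix.diagonal fun v => X - C (f v) := by
    ext i j
    by_cases hij : i = j
    · subst hij; simp
    · simp [hij, Matrix.diagonal_apply_ne _ hij]
  rw [Matrix.charpoly, this, Matrix.det_diagonal]

lemma multiset_map_eq_of_prod {f g : V → F}
    (h : ∏ v, (X - C (f v)) = ∏ v, (X - C (g v))) :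
    Finset.univ.val.map f = Finset.univ.val.map g := by
  have hr : ∀ (f : V → F), (∏ v, (X - C (f v))).roots = Finset.univ.val.map f := by
    intro f
    rw [Polynomial.roots_prod _ _ (by
      apply Finset.prod_ne_zero_iff.mpr; intro v _; exact X_sub_C_ne_zero (f v))]
    simp [Polynomial.roots_X_sub_C]
  rw [← hr f, ← hr g, h]

lemma exists_equiv_of_multiset_map_eq {F : Type*} [DecidableEq F] {f g : V → F}
    (h : Finset.univ.val.map f = Finset.univ.val.map g) :
    ∃ σ : V ≃ V, ∀ v, g (σ v) = f v := by
  have hcard : ∀ c : F, Fintype.card {v // f v = c} = Fintype.card {v // g v = c} := by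
    intro c
    have := congrArg (Multiset.count c) h
    rw [Multiset.count_map, Multiset.count_map] at this
    simpa [Fintype.card_subtype, Finset.filter, eq_comm] using this
  refine ⟨Equiv.ofFiberEquiv (f := f) (g := g)
    (fun c => Fintype.equivOfCardEq (hcard c)), fun v => Equiv.ofFiberEquiv_map _ v⟩

lemma perm_semiconj_diagonal (σ : V ≃ V) (f g : V → F) (hfg : ∀ v, g (σ v) = f v) :
    ∃ P : Matrix V V F, IsUnit P ∧ Matrix.diagonal f * P = P * Matrix.diagonal g := by
  refine ⟨Matrix.of fun i j => if σ i = j then 1 else 0, ?_, ?_⟩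
  · rw [Matrix.isUnit_iff_isUnit_det]
    apply Matrix.isUnit_det_of_right_inverse (B := Matrix.of fun i j => if σ j = i then 1 else 0)
    ext i j
    simp only [Matrix.mul_apply, Matrix.of_apply, Matrix.one_apply]
    rw [Finset.sum_eq_single (σ i)]
    · simp [σ.injective.eq_iff, eq_comm]
    · intro b _ hb; simp [Ne.symm hb]
    · simp
  · ext i j
    rw [Matrix.diagonal_mul, Matrix.mul_diagonal]
    by_cases hij : σ i = j
    · subst hij
      simp [hfg i]
    · simp [Matrix.of_apply, hij]

lemma descent {A B : Matrix V V ℚ} {M : Matrix V V ℝ} (hM : IsUnit M)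
    (hc : A.map (fun q : ℚ => (q : ℝ)) * M = M * B.map (fun q : ℚ => (q : ℝ))) :
    ∃ N : Matrix V V ℚ, IsUnit N ∧ A * N = N * B := by
  classical
  set E : Submodule ℚ ℝ := Submodule.span ℚ (Set.range fun p : V × V => M p.1 p.2) with hE
  haveI : FiniteDimensional ℚ E :=
    FiniteDimensional.span_of_finite ℚ (Set.finite_range _)
  set b := Module.finBasis ℚ E with hb
  set k := Module.finrank ℚ E with hk
  have hmem : ∀ u v, M u v ∈ E := fun u v =>
    Submodule.subset_span ⟨(u, v), rfl⟩
  set Me : V → V → E := fun u v => ⟨M u v, hmem u v⟩ with hMe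
  set Nm : Fin k → Matrix V V ℚ := fun j => Matrix.of fun u v => b.repr (Me u v) j with hNm
  have hMsum : ∀ u v, M u v = ∑ j, (Nm j u v : ℝ) * (b j : ℝ) := by
    intro u v
    have h1 := congrArg (Subtype.val : E → ℝ) (b.sum_repr (Me u v))
    have h2 : (Me u v : ℝ) = M u v := rfl
    rw [← h2, ← h1, AddSubmonoidClass.coe_finset_sum]
    refine Finset.sum_congr rfl fun j _ => ?_
    rw [SetLike.val_smul, Rat.smul_def]
    rfl
  have hli : LinearIndependent ℚ (fun j : Fin k => (b j : ℝ)) :=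
    b.linearIndependent.map' E.subtype (Submodule.ker_subtype E)
  have hNsemi : ∀ j, A * Nm j = Nm j * B := by
    have key : ∀ u v, ∀ j, (A * Nm j - Nm j * B) u v = 0 := by
      intro u v
      have hentry := congrFun (congrFun hc u) v
      rw [Matrix.mul_apply, Matrix.mul_apply] at hentry
      have lhs : ∑ w, (A.map (fun q : ℚ => (q : ℝ))) u w * M w v
          = ∑ j, ((A * Nm j) u v : ℝ) * (b j : ℝ) := by
        rw [Finset.sum_congr rfl fun w _ => by rw [hMsum w v, Finset.mul_sum]]
        rw [Finset.sum_comm]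
        refine Finset.sum_congr rfl fun j _ => ?_
        simp only [Matrix.map_apply, ← mul_assoc]
        rw [← Finset.sum_mul]
        congr 1
        rw [Matrix.mul_apply]
        push_cast
        rfl
      have rhs : ∑ w, M u w * (B.map (fun q : ℚ => (q : ℝ))) w v
          = ∑ j, ((Nm j * B) u v : ℝ) * (b j : ℝ) := by
        rw [Finset.sum_congr rfl fun w _ => by rw [hMsum u w, Finset.sum_mul]]
        rw [Finset.sum_comm]
        refine Finset.sum_congr rfl fun j _ => ?_
        simp only [Matrix.map_apply, mul_right_comm]
        rw [← Finset.sum_mul]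
        congr 1
        rw [Matrix.mul_apply]
        push_cast
        rfl
      have hsum0 : ∑ j, ((A * Nm j - Nm j * B) u v) • ((b j : ℝ)) = 0 := by
        have h3 : ∑ j, ((A * Nm j) u v : ℝ) * (b j : ℝ)
            - ∑ j, ((Nm j * B) u v : ℝ) * (b j : ℝ) = 0 := by
          rw [← lhs, ← rhs, hentry, sub_self]
        rw [← Finset.sum_sub_distrib] at h3
        rw [← h3]
        refine Finset.sum_congr rfl fun j _ => ?_
        rw [Rat.smul_def, Matrix.sub_apply]
        push_cast
        ring
      exact fun j => Fintype.linearIndependent_iff.mp hli _ hsum0 j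
    intro j
    ext u v
    have h4 := key u v j
    rw [Matrix.sub_apply, sub_eq_zero] at h4
    exact h4
  set p : MvPolynomial (Fin k) ℚ :=
    (Matrix.of fun u v => ∑ j, MvPolynomial.X j * MvPolynomial.C (Nm j u v)).det with hp
  have hpev : MvPolynomial.eval₂ (Rat.castHom ℝ) (fun j => (b j : ℝ)) p = M.det := by
    rw [hp, ← MvPolynomial.coe_eval₂Hom, RingHom.map_det]
    congr 1
    ext u v
    rw [RingHom.mapMatrix_apply, Matrix.map_apply, Matrix.of_apply, map_sum, hMsum u v]
    refine Finset.sum_congr rfl fun j _ => ?_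
    rw [_root_.map_mul]
    simp only [MvPolynomial.eval₂Hom_X', MvPolynomial.eval₂Hom_C]
    rw [mul_comm]
    rfl
  have hp0 : p ≠ 0 := by
    intro h0
    rw [h0] at hpev
    rw [MvPolynomial.eval₂_zero] at hpev
    exact ((Matrix.isUnit_iff_isUnit_det M).mp hM).ne_zero hpev.symm
  obtain ⟨x, hx⟩ : ∃ x : Fin k → ℚ, MvPolynomial.eval x p ≠ 0 := by
    by_contra hcon
    push_neg at hcon
    exact hp0 (MvPolynomial.funext fun y => by rw [map_zero]; exact hcon y)
  refine ⟨∑ j, x j • Nm j, ?_, ?_⟩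
  · rw [Matrix.isUnit_iff_isUnit_det, isUnit_iff_ne_zero]
    have h5 : MvPolynomial.eval x p = (∑ j, x j • Nm j).det := by
      rw [hp, RingHom.map_det]
      congr 1
      ext u v
      rw [RingHom.mapMatrix_apply, Matrix.map_apply, Matrix.of_apply, map_sum]
      simp [Matrix.sum_apply]
    rw [h5] at hx
    exact hx
  · rw [Finset.mul_sum, Finset.sum_congr rfl fun j _ => ?_]
    · rw [Finset.sum_mul]
    · rw [Matrix.mul_smul, hNsemi j, Matrix.smul_mul]

lemma isHermitian_map_real {A : Matrix V V ℚ} (hA : Aᵀ = A) :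
    (A.map (fun q : ℚ => (q : ℝ))).IsHermitian := by
  unfold Matrix.IsHermitian
  ext i j
  have h1 := congrFun (congrFun hA i) j
  rw [Matrix.transpose_apply] at h1
  rw [Matrix.conjTranspose_apply, Matrix.map_apply, Matrix.map_apply, star_trivial, h1]

lemma unitary_isUnit (U : Matrix.unitaryGroup V ℝ) : IsUnit (U : Matrix V V ℝ) := by
  rw [Matrix.isUnit_iff_isUnit_det]
  exact Matrix.isUnit_det_of_right_inverse (Matrix.mem_unitaryGroup_iff.mp U.2)

lemma sym_similar {A B : Matrix V V ℚ} (hA : Aᵀ = A) (hB : Bᵀ = B)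
    (h : A.charpoly = B.charpoly) :
    ∃ N : Matrix V V ℚ, IsUnit N ∧ N⁻¹ * A * N = B := by
  classical
  have hA' : (A.map (fun q : ℚ => (q : ℝ))).IsHermitian := isHermitian_map_real hA
  have hB' : (B.map (fun q : ℚ => (q : ℝ))).IsHermitian := isHermitian_map_real hB
  set A' := A.map (fun q : ℚ => (q : ℝ))
  set B' := B.map (fun q : ℚ => (q : ℝ))
  set U₁ : Matrix V V ℝ := (Matrix.IsHermitian.eigenvectorUnitary hA' : Matrix V V ℝ) with hU₁
  set U₂ : Matrix V V ℝ := (Matrix.IsHermitian.eigenvectorUnitary hB' : Matrix V V ℝ) with hU₂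
  set d₁ : V → ℝ := Matrix.IsHermitian.eigenvalues hA' with hd₁
  set d₂ : V → ℝ := Matrix.IsHermitian.eigenvalues hB' with hd₂
  have hspec1 : A' = U₁ * Matrix.diagonal d₁ * star U₁ := by
    have := Matrix.IsHermitian.spectral_theorem hA'
    simpa using this
  have hspec2 : B' = U₂ * Matrix.diagonal d₂ * star U₂ := by
    have := Matrix.IsHermitian.spectral_theorem hB'
    simpa using this
  have hu1 : star U₁ * U₁ = 1 :=
    Matrix.mem_unitaryGroup_iff'.mp (Matrix.IsHermitian.eigenvectorUnitary hA').2
  have hu1' : U₁ * star U₁ = 1 :=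
    Matrix.mem_unitaryGroup_iff.mp (Matrix.IsHermitian.eigenvectorUnitary hA').2
  have hu2 : star U₂ * U₂ = 1 :=
    Matrix.mem_unitaryGroup_iff'.mp (Matrix.IsHermitian.eigenvectorUnitary hB').2
  have hu2' : U₂ * star U₂ = 1 :=
    Matrix.mem_unitaryGroup_iff.mp (Matrix.IsHermitian.eigenvectorUnitary hB').2
  -- charpolys over ℝ
  have hcp : A'.charpoly = B'.charpoly := by
    have h1 : A' = A.map (Rat.castHom ℝ) := rfl
    have h2 : B' = B.map (Rat.castHom ℝ) := rfl
    rw [h1, h2, Matrix.charpoly_map, Matrix.charpoly_map, h]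
  have hsc1 : A' * U₁ = U₁ * Matrix.diagonal d₁ := by
    rw [hspec1, mul_assoc, mul_assoc, hu1, mul_one]
  have hsc2 : B' * U₂ = U₂ * Matrix.diagonal d₂ := by
    rw [hspec2, mul_assoc, mul_assoc, hu2, mul_one]
  have hcd : (∏ v, (X - C (d₁ v))) = ∏ v, (X - C (d₂ v)) := by
    rw [← _root_.charpoly_diagonal, ← _root_.charpoly_diagonal]
    rw [← charpoly_eq_of_semiconj (unitary_isUnit _) hsc1,
      ← charpoly_eq_of_semiconj (unitary_isUnit _) hsc2]
    exact hcp
  obtain ⟨σ, hσ⟩ := exists_equiv_of_multiset_map_eq (multiset_map_eq_of_prod hcd)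
  obtain ⟨P, hPu, hPD⟩ := perm_semiconj_diagonal σ d₁ d₂ hσ
  have hMu : IsUnit (U₁ * P * star U₂) :=
    ((unitary_isUnit _).mul hPu).mul (by
      have : IsUnit U₂ := unitary_isUnit _
      rw [Matrix.isUnit_iff_isUnit_det] at this ⊢
      rwa [Matrix.star_eq_conjTranspose, Matrix.det_conjTranspose, isUnit_star])
  have hsemi : A' * (U₁ * P * star U₂) = (U₁ * P * star U₂) * B' := by
    rw [hspec1, hspec2]
    simp only [mul_assoc]
    rw [← mul_assoc (star U₁) U₁, hu1, one_mul, ← mul_assoc (star U₂) U₂, hu2, one_mul]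
    rw [← mul_assoc (Matrix.diagonal d₁) P, hPD, mul_assoc]
  obtain ⟨N, hNu, hNsemi⟩ := descent hMu hsemi
  exact ⟨N, hNu, conj_of_semiconj hNu hNsemi⟩

/-- The pencil over `ℚ[μ]`. -/
noncomputable def pencil (G : SimpleGraph V) : Matrix V V (Polynomial ℚ) :=
  (adjMatQ G).map Polynomial.C - (Polynomial.X : Polynomial ℚ) • (degMatQ G).map Polynomial.C

lemma AmuQ_eq_pencil_map (G : SimpleGraph V) :
    AmuQ G = (pencil G).map (algebraMap (Polynomial ℚ) RatFuncQ) := by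
  unfold AmuQ pencil
  ext u v
  simp only [Matrix.sub_apply, Matrix.map_apply, Matrix.smul_apply, map_sub, _root_.map_mul,
    smul_eq_mul, muQ]

lemma eval_charpoly (A : Matrix V V F) (s : F) :
    A.charpoly.eval s = (s • (1 : Matrix V V F) - A).det := by
  rw [Matrix.charpoly, show Polynomial.eval s = ⇑(Polynomial.evalRingHom s) from rfl,
    RingHom.map_det]
  congr 1
  ext u v
  by_cases huv : u = v
  · subst huv
    simp [charmatrix_apply_eq]
  · simp [charmatrix_apply_ne _ _ _ huv, Matrix.one_apply_ne huv]

lemma adjMatQ_symm (G : SimpleGraph V) : (adjMatQ G)ᵀ = adjMatQ G := by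
  ext u v
  simp only [Matrix.transpose_apply, adjMatQ, Matrix.of_apply]
  rw [SimpleGraph.adj_comm]

theorem similar_over_ratFunc' (X Y : SimpleGraph V)
    (h : ∃ M : Matrix V V RatFuncQ, IsUnit M ∧ M⁻¹ * AmuQ X * M = AmuQ Y) :
    (∃ N : Matrix V V ℚ, IsUnit N ∧ N⁻¹ * adjMatQ X * N = adjMatQ Y) ∧
    (∃ N : Matrix V V ℚ, IsUnit N ∧ N⁻¹ * degMatQ X * N = degMatQ Y) := by
  classical
  obtain ⟨M, hMu, hMs⟩ := h
  -- semiconjugation form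
  have hsemi : AmuQ X * M = M * AmuQ Y := by
    rw [← hMs, ← mul_assoc, ← mul_assoc,
      Matrix.mul_nonsing_inv _ ((Matrix.isUnit_iff_isUnit_det M).mp hMu), one_mul]
  have hcpK : (AmuQ X).charpoly = (AmuQ Y).charpoly :=
    charpoly_eq_of_semiconj hMu hsemi
  have hcpR : (pencil X).charpoly = (pencil Y).charpoly := by
    have h1 : ((pencil X).charpoly).map (algebraMap (Polynomial ℚ) RatFuncQ)
        = ((pencil Y).charpoly).map (algebraMap (Polynomial ℚ) RatFuncQ) := by
      rw [← Matrix.charpoly_map, ← Matrix.charpoly_map, ← AmuQ_eq_pencil_map,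
        ← AmuQ_eq_pencil_map, hcpK]
    exact Polynomial.map_injective _ (IsFractionRing.injective (Polynomial ℚ) RatFuncQ) h1
  -- scalar determinant identity
  have hdet : ∀ s t : ℚ,
      (s • (1 : Matrix V V ℚ) + t • degMatQ X - adjMatQ X).det
        = (s • (1 : Matrix V V ℚ) + t • degMatQ Y - adjMatQ Y).det := by
    intro s t
    have key : ∀ G : SimpleGraph V,
        ((Polynomial.evalRingHom s).comp
          (Polynomial.mapRingHom (Polynomial.evalRingHom t))) (pencil G).charpoly
        = (s • (1 : Matrix V V ℚ) + t • degMatQ G - adjMatQ G).det := by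
      intro G
      rw [Matrix.charpoly, RingHom.map_det]
      congr 1
      ext u v
      by_cases huv : u = v
      · subst huv
        simp only [RingHom.mapMatrix_apply, Matrix.map_apply, charmatrix_apply_eq,
          map_sub, RingHom.coe_comp, Function.comp_apply, Polynomial.coe_mapRingHom,
          Polynomial.map_X, Polynomial.eval_X, Polynomial.coe_evalRingHom,
          Polynomial.map_C, Polynomial.eval_C]
        simp only [pencil, Matrix.sub_apply, Matrix.map_apply, Matrix.smul_apply,
          Polynomial.eval_sub, Polynomial.eval_mul, Polynomial.eval_X, Polynomial.eval_C,
          smul_eq_mul]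
        simp [Matrix.one_apply_eq]
        ring
      · simp only [RingHom.mapMatrix_apply, Matrix.map_apply, charmatrix_apply_ne _ _ _ huv,
          map_neg, RingHom.coe_comp, Function.comp_apply, Polynomial.coe_mapRingHom,
          Polynomial.map_C, Polynomial.coe_evalRingHom, Polynomial.eval_C]
        simp only [pencil, Matrix.sub_apply, Matrix.map_apply, Matrix.smul_apply,
          Polynomial.eval_sub, Polynomial.eval_mul, Polynomial.eval_X, Polynomial.eval_C,
          smul_eq_mul]
        simp [Matrix.one_apply_ne huv, degMatQ, Matrix.diagonal_apply_ne _ huv]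
    rw [← key X, ← key Y, hcpR]
  constructor
  · -- adjacency part
    have hcA : (adjMatQ X).charpoly = (adjMatQ Y).charpoly := by
      apply Polynomial.funext
      intro s
      rw [_root_.eval_charpoly, _root_.eval_charpoly]
      have h7 := hdet s 0
      simp only [zero_smul, add_zero] at h7
      exact h7
    exact sym_similar (adjMatQ_symm X) (adjMatQ_symm Y) hcA
  · -- degree part
    have hprod : ∀ s : ℚ, (∏ v, (s + (gdeg X v : ℚ))) = ∏ v, (s + (gdeg Y v : ℚ)) := by
      intro s
      have key : ∀ G : SimpleGraph V, ∀ e : ℚ,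
          Polynomial.eval e ((Polynomial.C s • (1 : Matrix V V (Polynomial ℚ))
            + (degMatQ G).map Polynomial.C
            - (Polynomial.X : Polynomial ℚ) • (adjMatQ G).map Polynomial.C).det)
          = (s • (1 : Matrix V V ℚ) + degMatQ G - e • adjMatQ G).det := by
        intro G e
        rw [show Polynomial.eval e = ⇑(Polynomial.evalRingHom e) from rfl, RingHom.map_det]
        congr 1
        ext u v
        simp only [RingHom.mapMatrix_apply, Matrix.map_apply, Matrix.sub_apply,
          Matrix.add_apply, Matrix.smul_apply, smul_eq_mul, Polynomial.coe_evalRingHom,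
          Polynomial.eval_sub,
          Polynomial.eval_add, Polynomial.eval_mul, Polynomial.eval_C, Polynomial.eval_X]
        by_cases huv : u = v
        · subst huv
          simp only [Matrix.one_apply_eq, Polynomial.eval_one]
          try ring
        · simp only [Matrix.one_apply_ne huv, Polynomial.eval_zero]
          try ring
      have hqeq : (Polynomial.C s • (1 : Matrix V V (Polynomial ℚ))
            + (degMatQ X).map Polynomial.C
            - (Polynomial.X : Polynomial ℚ) • (adjMatQ X).map Polynomial.C).det
          = (Polynomial.C s • (1 : Matrix V V (Polynomial ℚ))
            + (degMatQ Y).map Polynomial.C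
            - (Polynomial.X : Polynomial ℚ) • (adjMatQ Y).map Polynomial.C).det := by
        apply Polynomial.eq_of_infinite_eval_eq
        apply Set.Infinite.mono (s := {(0 : ℚ)}ᶜ)
        swap
        · exact (Set.finite_singleton 0).infinite_compl
        intro e he
        have hene : e ≠ 0 := he
        simp only [Set.mem_setOf_eq]
        rw [key X e, key Y e]
        have hfac : ∀ G : SimpleGraph V,
            s • (1 : Matrix V V ℚ) + degMatQ G - e • adjMatQ G
            = e • ((s / e) • (1 : Matrix V V ℚ) + (1 / e) • degMatQ G - adjMatQ G) := by
          intro G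
          rw [smul_sub, smul_add, smul_smul, smul_smul]
          rw [mul_div_cancel₀ _ hene, mul_one_div_cancel hene, one_smul]
        rw [hfac X, hfac Y, Matrix.det_smul, Matrix.det_smul, hdet (s / e) (1 / e)]
      have h0 := congrArg (Polynomial.eval (0 : ℚ)) hqeq
      rw [key X 0, key Y 0] at h0
      have hdiag : ∀ G : SimpleGraph V,
          s • (1 : Matrix V V ℚ) + degMatQ G - (0 : ℚ) • adjMatQ G
          = Matrix.diagonal (fun v => s + (gdeg G v : ℚ)) := by
        intro G
        rw [zero_smul, sub_zero]
        ext u v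
        by_cases huv : u = v
        · subst huv; simp [degMatQ, Matrix.one_apply_eq]
        · simp [degMatQ, Matrix.one_apply_ne huv, Matrix.diagonal_apply_ne _ huv]
      rw [hdiag X, hdiag Y, Matrix.det_diagonal, Matrix.det_diagonal] at h0
      exact h0
    have hpoly : (∏ v, (Polynomial.X - Polynomial.C (-(gdeg X v : ℚ))))
        = ∏ v, (Polynomial.X - Polynomial.C (-(gdeg Y v : ℚ))) := by
      apply Polynomial.funext
      intro s
      simp only [Polynomial.eval_prod, Polynomial.eval_sub, Polynomial.eval_X,
        Polynomial.eval_C, sub_neg_eq_add]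
      exact hprod s
    obtain ⟨σ, hσ⟩ := exists_equiv_of_multiset_map_eq (multiset_map_eq_of_prod hpoly)
    have hσ' : ∀ v, ((gdeg Y (σ v) : ℚ)) = (gdeg X v : ℚ) := fun v => by
      have h6 := hσ v
      exact neg_inj.mp h6
    obtain ⟨P, hPu, hPD⟩ := perm_semiconj_diagonal σ (fun v => (gdeg X v : ℚ))
      (fun v => (gdeg Y v : ℚ)) hσ'
    exact ⟨P, hPu, conj_of_semiconj hPu hPD⟩


end

end Helpers

/-- If `A₁ - μD₁` and `A₂ - μD₂` are similar over `ℚ(μ)`, then `A₁` and `A₂` are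
similar over `ℚ`, as are `D₁` and `D₂`. -/
theorem similar_over_ratFunc {V : Type*} [Fintype V] [DecidableEq V]
    (X Y : SimpleGraph V)
    (h : ∃ M : Matrix V V RatFuncQ, IsUnit M ∧ M⁻¹ * AmuQ X * M = AmuQ Y) :
    (∃ N : Matrix V V ℚ, IsUnit N ∧ N⁻¹ * adjMatQ X * N = adjMatQ Y) ∧
    (∃ N : Matrix V V ℚ, IsUnit N ∧ N⁻¹ * degMatQ X * N = degMatQ Y) := by
  exact similar_over_ratFunc' X Y h
end
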